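/- arXiv:0906.1477 — 4 statements merged into one kernel-verified Lean document; each statement's English description precedes it below -/
import Mathlib

section
/- The functional J(w) = ∫₀¹(φ(w) + ½ν²|w'|²)dx on A = {w ∈ H¹(0,1) : w(0) = d} attains its infimum: there exists w̄ ∈ A with J(w̄) = inf_A J. -/
open MeasureTheory Filter Topology intervalIntegral
open Set
open scoped InnerProductSpace

noncomputable section Stmt12Aux

abbrev μ01 : Measure ℝ := volume.restrict (Set.Ioo (0:ℝ) 1)

instance : IsProbabilityMeasure μ01 := by
  constructor
  rw [Measure.restrict_apply_univ, Real.volume_Ioo]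
  norm_num

lemma phi_min {φ : ℝ → ℝ} (hφ : ∀ s : ℝ, φ s = if s < 1 then s ^ 2 / 2 else 1 / 2) (s : ℝ) :
    φ s = (min s 1) ^ 2 / 2 := by
  rw [hφ]
  rcases lt_or_ge s 1 with h | h
  · simp [h, min_eq_left h.le]
  · simp [not_lt.2 h, min_eq_right h]

lemma phi_nonneg {φ : ℝ → ℝ} (hφ : ∀ s : ℝ, φ s = if s < 1 then s ^ 2 / 2 else 1 / 2) (s : ℝ) :
    0 ≤ φ s := by
  rw [phi_min hφ]; positivity

lemma phi_continuous {φ : ℝ → ℝ} (hφ : ∀ s : ℝ, φ s = if s < 1 then s ^ 2 / 2 else 1 / 2) :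
    Continuous φ := by
  have : φ = fun s => (min s 1) ^ 2 / 2 := funext (phi_min hφ)
  rw [this]; fun_prop

lemma phi_lip {φ : ℝ → ℝ} (hφ : ∀ s : ℝ, φ s = if s < 1 then s ^ 2 / 2 else 1 / 2)
    {a b M : ℝ} (ha : |a| ≤ M) (hb : |b| ≤ M) :
    |φ a - φ b| ≤ max M 1 * |a - b| := by
  rw [phi_min hφ, phi_min hφ]
  have key : ∀ x y : ℝ, (y - x) ≤ |x - y| := fun x y => by
    rw [abs_sub_comm]; exact le_abs_self _
  have h1 : |min a 1 - min b 1| ≤ |a - b| := by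
    rcases le_total a 1 with h2 | h2 <;> rcases le_total b 1 with h3 | h3
    · rw [min_eq_left h2, min_eq_left h3]
    · rw [min_eq_left h2, min_eq_right h3]
      have e : |a - 1| = 1 - a := by rw [abs_of_nonpos (by linarith : a - 1 ≤ 0)]; ring
      have := key a b; linarith
    · rw [min_eq_right h2, min_eq_left h3]
      have e : |1 - b| = 1 - b := abs_of_nonneg (by linarith)
      have := le_abs_self (a - b)
      linarith
    · rw [min_eq_right h2, min_eq_right h3]
      simp [abs_nonneg]
  have h2 : |min a 1| ≤ max M 1 := by
    rcases le_total a 1 with h2 | h2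
    · rw [min_eq_left h2]; exact le_trans ha (le_max_left _ _)
    · rw [min_eq_right h2]; simp
  have h3 : |min b 1| ≤ max M 1 := by
    rcases le_total b 1 with h3 | h3
    · rw [min_eq_left h3]; exact le_trans hb (le_max_left _ _)
    · rw [min_eq_right h3]; simp
  have : min a 1 ^ 2 / 2 - min b 1 ^ 2 / 2 = (min a 1 + min b 1) / 2 * (min a 1 - min b 1) := by
    ring
  rw [this, abs_mul]
  have habs : |(min a 1 + min b 1) / 2| ≤ max M 1 := by
    rw [abs_div]
    have := abs_add_le (min a 1) (min b 1)
    simp only [abs_two]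
    linarith
  calc |(min a 1 + min b 1) / 2| * |min a 1 - min b 1|
      ≤ max M 1 * |a - b| := by
        apply mul_le_mul habs h1 (abs_nonneg _) (le_trans (abs_nonneg _) habs)


abbrev Hsp := Lp ℝ 2 μ01

def ind (x : ℝ) : Hsp :=
  indicatorConstLp 2 (measurableSet_Ioo : MeasurableSet (Set.Ioo 0 x)) (measure_ne_top μ01 _) (1:ℝ)

lemma meas01 {x : ℝ} (h0 : 0 ≤ x) (h1 : x ≤ 1) : μ01 (Set.Ioo 0 x) = ENNReal.ofReal x := by
  rw [Measure.restrict_apply measurableSet_Ioo,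
    Set.inter_eq_left.mpr (Set.Ioo_subset_Ioo le_rfl h1), Real.volume_Ioo, sub_zero]

lemma inner_ind (x : ℝ) (F : Hsp) : ⟪ind x, F⟫_ℝ = ∫ t in Set.Ioo 0 x, F t ∂μ01 :=
  L2.inner_indicatorConstLp_one _ _ F

lemma norm_ind {x : ℝ} (h0 : 0 ≤ x) (h1 : x ≤ 1) : ‖ind x‖ = Real.sqrt x := by
  rw [ind, norm_indicatorConstLp (by norm_num) (by norm_num), measureReal_def, meas01 h0 h1,
    ENNReal.toReal_ofReal h0, Real.sqrt_eq_rpow]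
  norm_num

lemma norm_ind_le_one {x : ℝ} (h0 : 0 ≤ x) (h1 : x ≤ 1) : ‖ind x‖ ≤ 1 := by
  rw [norm_ind h0 h1]
  exact Real.sqrt_le_one.2 h1

lemma inner_ind_ind {x y : ℝ} (h0 : 0 ≤ y) (hyx : y ≤ x) (h1 : x ≤ 1) :
    ⟪ind y, ind x⟫_ℝ = y := by
  rw [inner_ind]
  have hae : ∀ᵐ t ∂(μ01.restrict (Set.Ioo 0 y)), (ind x) t = (Set.Ioo 0 x).indicator (fun _ => (1:ℝ)) t :=
    ae_restrict_of_ae (indicatorConstLp_coeFn)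
  rw [integral_congr_ae hae,
    setIntegral_indicator measurableSet_Ioo,
    Set.inter_eq_left.mpr (Set.Ioo_subset_Ioo le_rfl hyx)]
  simp only [setIntegral_const, smul_eq_mul, mul_one]
  rw [measureReal_def, meas01 h0 (le_trans hyx h1), ENNReal.toReal_ofReal h0]

lemma norm_ind_sub {x y : ℝ} (h0 : 0 ≤ y) (hyx : y ≤ x) (h1 : x ≤ 1) :
    ‖ind x - ind y‖ = Real.sqrt (x - y) := by
  have hx0 : 0 ≤ x := le_trans h0 hyx
  have hsq : ‖ind x - ind y‖ ^ 2 = x - y := by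
    rw [norm_sub_sq_real, real_inner_comm, inner_ind_ind h0 hyx h1,
      norm_ind hx0 h1, norm_ind h0 (le_trans hyx h1),
      Real.sq_sqrt hx0, Real.sq_sqrt h0]
    ring
  rw [← hsq, Real.sqrt_sq (norm_nonneg _)]

lemma integrable_of_memL2 {h : ℝ → ℝ} (hmem : MemLp h 2 μ01) : Integrable h μ01 :=
  memLp_one_iff_integrable.mp (hmem.mono_exponent (by norm_num))

lemma primitive_eq_inner {h : ℝ → ℝ} (hmem : MemLp h 2 μ01) {x : ℝ}
    (hx : x ∈ Set.Icc (0:ℝ) 1) : ∫ t in (0:ℝ)..x, h t = ⟪ind x, hmem.toLp h⟫_ℝ := by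
  rw [inner_ind]
  have h1 : ∫ t in Set.Ioo 0 x, (hmem.toLp h) t ∂μ01 = ∫ t in Set.Ioo 0 x, h t ∂μ01 :=
    integral_congr_ae (ae_restrict_of_ae hmem.coeFn_toLp)
  rw [h1]
  have h2 : μ01.restrict (Set.Ioo 0 x) = volume.restrict (Set.Ioo 0 x) := by
    rw [Measure.restrict_restrict measurableSet_Ioo,
      Set.inter_eq_left.mpr (Set.Ioo_subset_Ioo le_rfl hx.2)]
  rw [intervalIntegral.integral_of_le hx.1, integral_Ioc_eq_integral_Ioo]
  exact (congrArg (fun m => ∫ t, h t ∂m) h2).symm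

lemma cont_v {v h : ℝ → ℝ} (hmem : MemLp h 2 μ01)
    (hform : ∀ x ∈ Set.Icc (0:ℝ) 1, v x = v 0 + ∫ t in (0:ℝ)..x, h t) :
    ContinuousOn v (Set.Icc 0 1) := by
  have h2 : IntegrableOn h (Set.Ioo (0:ℝ) 1) volume := integrable_of_memL2 hmem
  have hInt : IntegrableOn h (Set.Icc (0:ℝ) 1) volume :=
    (integrableOn_Icc_iff_integrableOn_Ioo (by simp) (by simp)).2 h2
  have hc : ContinuousOn (fun x => v 0 + ∫ t in Set.Ioc (0:ℝ) x, h t) (Set.Icc 0 1) :=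
    continuousOn_const.add (continuousOn_primitive hInt)
  refine (hc.congr ?_)
  intro x hx
  rw [hform x hx, intervalIntegral.integral_of_le hx.1]

lemma integrable_phi_v {φ v h : ℝ → ℝ}
    (hφ : ∀ s : ℝ, φ s = if s < 1 then s ^ 2 / 2 else 1 / 2)
    (hmem : MemLp h 2 μ01)
    (hform : ∀ x ∈ Set.Icc (0:ℝ) 1, v x = v 0 + ∫ t in (0:ℝ)..x, h t) :
    Integrable (fun x => φ (v x)) μ01 := by
  have : ContinuousOn (fun x => φ (v x)) (Set.Icc 0 1) :=
    (phi_continuous hφ).comp_continuousOn (cont_v hmem hform)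
  exact (this.integrableOn_Icc).mono_set Set.Ioo_subset_Icc_self


lemma grid_bound {D : ℝ → ℝ} {C δ : ℝ} {N : ℕ} (hN : 0 < N) (hC : 0 ≤ C)
    (hHold : ∀ y x : ℝ, 0 ≤ y → y ≤ x → x ≤ 1 → |D x - D y| ≤ C * Real.sqrt (x - y))
    (hgrid : ∀ i : ℕ, i ≤ N → |D ((i : ℝ) / N)| ≤ δ)
    {x : ℝ} (hx : x ∈ Set.Icc (0:ℝ) 1) : |D x| ≤ δ + C * Real.sqrt (1 / N) := by
  have hNR : (0:ℝ) < N := Nat.cast_pos.mpr hN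
  set i := ⌊x * N⌋₊ with hi
  have hxN0 : 0 ≤ x * N := mul_nonneg hx.1 hNR.le
  have hiN : i ≤ N := by
    have : (⌊x * N⌋₊ : ℝ) ≤ x * N := Nat.floor_le hxN0
    have hxn : x * N ≤ N := by nlinarith [hx.2]
    exact_mod_cast Nat.cast_le.mp (le_trans this hxn) |>.trans le_rfl
  have hy0 : (0:ℝ) ≤ (i:ℝ) / N := by positivity
  have hyx : (i:ℝ) / N ≤ x := by
    rw [div_le_iff₀ hNR]
    exact Nat.floor_le hxN0
  have hxy : x - (i:ℝ) / N ≤ 1 / N := by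
    have : x * N < i + 1 := Nat.lt_floor_add_one _
    rw [sub_le_iff_le_add, ← add_div] at *
    rw [le_div_iff₀ hNR]
    push_cast
    linarith
  calc |D x| = |D ((i:ℝ)/N) + (D x - D ((i:ℝ)/N))| := by ring_nf
    _ ≤ |D ((i:ℝ)/N)| + |D x - D ((i:ℝ)/N)| := abs_add_le _ _
    _ ≤ δ + C * Real.sqrt (x - (i:ℝ)/N) := add_le_add (hgrid i hiN) (hHold _ _ hy0 hyx hx.2)
    _ ≤ δ + C * Real.sqrt (1 / N) :=
        add_le_add le_rfl (mul_le_mul_of_nonneg_left (Real.sqrt_le_sqrt hxy) hC)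

lemma integral_sq_eq_norm {h : ℝ → ℝ} (hmem : MemLp h 2 μ01) :
    ∫ x in Set.Ioo (0:ℝ) 1, h x ^ 2 = ‖hmem.toLp h‖ ^ 2 := by
  rw [← real_inner_self_eq_norm_sq, L2.inner_def]
  have e1 : ∀ a : ℝ, ⟪hmem.toLp h a, hmem.toLp h a⟫_ℝ = (hmem.toLp h a) * (hmem.toLp h a) := by
    intro a; simp [RCLike.inner_apply]; ring
  simp_rw [e1]
  refine (MeasureTheory.integral_congr_ae ?_).symm
  filter_upwards [hmem.coeFn_toLp] with a ha
  rw [ha]; ring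

lemma J_split {φ v h : ℝ → ℝ}
    (hφ : ∀ s : ℝ, φ s = if s < 1 then s ^ 2 / 2 else 1 / 2)
    (hmem : MemLp h 2 μ01)
    (hform : ∀ x ∈ Set.Icc (0:ℝ) 1, v x = v 0 + ∫ t in (0:ℝ)..x, h t) (c : ℝ) :
    ∫ x in Set.Ioo (0:ℝ) 1, (φ (v x) + c * h x ^ 2) =
      (∫ x in Set.Ioo (0:ℝ) 1, φ (v x)) + c * ∫ x in Set.Ioo (0:ℝ) 1, h x ^ 2 := by
  rw [integral_add (integrable_phi_v hφ hmem hform) ((hmem.integrable_sq).const_mul c),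
    MeasureTheory.integral_const_mul]

end Stmt12Aux

section Main


set_option maxHeartbeats 2000000 in
/-- Existence of a minimizer: the functional `J(w) = ∫₀¹ (φ(w) + ½ν²|w'|²)`
on `A = {w ∈ H¹(0,1) : w(0) = d}` attains its infimum. Here an `H¹(0,1)`
function is encoded as a pair `(w, g)` with `g ∈ L²(0,1)` and
`w(x) = w(0) + ∫₀ˣ g` on `[0,1]`, and `φ(s) = ½s²` for `s < 1`, `φ(s) = ½` for
`s ≥ 1`. -/
theorem stmt_12 (ν : ℝ) (hν : 0 < ν) (d : ℝ)
    (φ : ℝ → ℝ) (hφ : ∀ s : ℝ, φ s = if s < 1 then s ^ 2 / 2 else 1 / 2) :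
    ∃ w g : ℝ → ℝ,
      MemLp g 2 (volume.restrict (Set.Ioo (0:ℝ) 1)) ∧
      (∀ x ∈ Set.Icc (0:ℝ) 1, w x = w 0 + ∫ t in (0:ℝ)..x, g t) ∧
      w 0 = d ∧
      ∀ v h : ℝ → ℝ,
        MemLp h 2 (volume.restrict (Set.Ioo (0:ℝ) 1)) →
        (∀ x ∈ Set.Icc (0:ℝ) 1, v x = v 0 + ∫ t in (0:ℝ)..x, h t) →
        v 0 = d →
        (∫ x in Set.Ioo (0:ℝ) 1, (φ (w x) + ν ^ 2 / 2 * (g x) ^ 2)) ≤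
          ∫ x in Set.Ioo (0:ℝ) 1, (φ (v x) + ν ^ 2 / 2 * (h x) ^ 2) := by
  classical
  set c : ℝ := ν ^ 2 / 2 with hc
  have hcpos : 0 < c := by rw [hc]; positivity
  clear_value c
  set S : Set ℝ := {r | ∃ v h : ℝ → ℝ, MemLp h 2 μ01 ∧
      (∀ x ∈ Set.Icc (0:ℝ) 1, v x = v 0 + ∫ t in (0:ℝ)..x, h t) ∧ v 0 = d ∧
      r = ∫ x in Set.Ioo (0:ℝ) 1, (φ (v x) + c * h x ^ 2)} with hSdef
  have hSne : S.Nonempty := by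
    refine ⟨_, (fun _ => d), (fun _ => 0), ?_, ?_, rfl, rfl⟩
    · exact memLp_const 0
    · intro x _; simp
  have hSlb : ∀ r ∈ S, 0 ≤ r := by
    rintro r ⟨v, h, _, _, _, rfl⟩
    refine integral_nonneg fun x => ?_
    have := phi_nonneg hφ (v x)
    positivity
  have hSbdd : BddBelow S := ⟨0, hSlb⟩
  set m : ℝ := sInf S with hm
  have hm0 : 0 ≤ m := le_csInf hSne hSlb
  clear_value m
  -- minimizing sequence
  have hseq : ∀ n : ℕ, ∃ pq : (ℝ → ℝ) × (ℝ → ℝ), ∃ _ : MemLp pq.2 2 μ01,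
      (∀ x ∈ Set.Icc (0:ℝ) 1, pq.1 x = pq.1 0 + ∫ t in (0:ℝ)..x, pq.2 t) ∧ pq.1 0 = d ∧
      (∫ x in Set.Ioo (0:ℝ) 1, (φ (pq.1 x) + c * pq.2 x ^ 2)) < m + 1/((n:ℝ)+1) := by
    intro n
    have hlt : m < m + 1/((n:ℝ)+1) := lt_add_of_pos_right m (by positivity)
    have hlt' : sInf S < m + 1/((n:ℝ)+1) := by rw [← hm]; exact hlt
    obtain ⟨r, hrS, hr⟩ := exists_lt_of_csInf_lt hSne hlt'
    obtain ⟨v, h, h1, h2, h3, h4⟩ := hrS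
    exact ⟨(v, h), h1, h2, h3, h4 ▸ hr⟩
  choose pq hmemn hformn h0n hvaln using hseq
  set Hn : ℕ → Hsp := fun n => (hmemn n).toLp _ with hHn
  have hJn : ∀ n, (∫ x in Set.Ioo (0:ℝ) 1, (φ ((pq n).1 x) + c * (pq n).2 x ^ 2)) =
      (∫ x in Set.Ioo (0:ℝ) 1, φ ((pq n).1 x)) + c * ‖Hn n‖ ^ 2 := by
    intro n
    rw [J_split hφ (hmemn n) (hformn n) c, integral_sq_eq_norm (hmemn n)]
  set R : ℝ := Real.sqrt ((m+1)/c) with hR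
  have hRpos : 0 < R := by rw [hR]; exact Real.sqrt_pos.2 (by positivity)
  have hHnR : ∀ n, ‖Hn n‖ ≤ R := by
    intro n
    have h1 : (0:ℝ) ≤ ∫ x in Set.Ioo (0:ℝ) 1, φ ((pq n).1 x) :=
      integral_nonneg fun x => phi_nonneg hφ _
    have h2 := hvaln n
    rw [hJn n] at h2
    have h3 : 1/((n:ℝ)+1) ≤ 1 := by
      rw [div_le_one (by positivity)]
      simp
    have h4 : ‖Hn n‖ ^ 2 ≤ (m+1)/c := by
      rw [le_div_iff₀ hcpos]
      nlinarith
    calc ‖Hn n‖ = Real.sqrt (‖Hn n‖ ^ 2) := (Real.sqrt_sq (norm_nonneg _)).symm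
      _ ≤ R := by rw [hR]; exact Real.sqrt_le_sqrt h4
  -- weak-* cluster point
  set ℓn : ℕ → WeakDual ℝ Hsp :=
    fun n => StrongDual.toWeakDual (InnerProductSpace.toDual ℝ Hsp (Hn n)) with hℓn
  have hK : IsCompact (WeakDual.toStrongDual ⁻¹'
      Metric.closedBall (0 : StrongDual ℝ Hsp) R) := WeakDual.isCompact_closedBall 0 R
  have hmemK : ∀ n, ℓn n ∈ WeakDual.toStrongDual ⁻¹'
      Metric.closedBall (0 : StrongDual ℝ Hsp) R := by
    intro n
    simp only [Set.mem_preimage, Metric.mem_closedBall, dist_zero_right, hℓn]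
    rw [show WeakDual.toStrongDual (StrongDual.toWeakDual
      (InnerProductSpace.toDual ℝ Hsp (Hn n))) = InnerProductSpace.toDual ℝ Hsp (Hn n) from rfl]
    rw [(InnerProductSpace.toDual ℝ Hsp).norm_map]
    exact hHnR n
  have hle : Filter.map ℓn atTop ≤ Filter.principal (WeakDual.toStrongDual ⁻¹'
      Metric.closedBall (0 : StrongDual ℝ Hsp) R) :=
    Filter.le_principal_iff.2 (Filter.mem_map.2 (Filter.univ_mem' hmemK))
  obtain ⟨ℓ, hℓK, hcl⟩ := hK.exists_clusterPt hle
  have hℓR : ‖WeakDual.toStrongDual ℓ‖ ≤ R := by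
    simpa [Metric.mem_closedBall, dist_zero_right] using hℓK
  set G : Hsp := (InnerProductSpace.toDual ℝ Hsp).symm (WeakDual.toStrongDual ℓ) with hG
  have hGnorm : ‖G‖ ≤ R := by
    rw [hG, (InnerProductSpace.toDual ℝ Hsp).symm.norm_map]
    exact hℓR
  have hGap : ∀ u : Hsp, ⟪G, u⟫_ℝ = ℓ u := by
    intro u
    rw [hG]
    exact InnerProductSpace.toDual_symm_apply
  set g : ℝ → ℝ := fun t => G t with hgdef
  have hgmem : MemLp g 2 μ01 := Lp.memLp G
  have hgtoLp : hgmem.toLp g = G := Lp.toLp_coeFn G (Lp.memLp G)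
  set w : ℝ → ℝ := fun x => d + ∫ t in (0:ℝ)..x, g t with hwdef
  have hw0 : w 0 = d := by simp [hwdef]
  have hformw : ∀ x ∈ Set.Icc (0:ℝ) 1, w x = w 0 + ∫ t in (0:ℝ)..x, g t := by
    intro x _
    rw [hw0]
  refine ⟨w, g, hgmem, hformw, hw0, ?_⟩
  intro v h hmemh hformh hv0
  have hRS : (∫ x in Set.Ioo (0:ℝ) 1, (φ (v x) + c * h x ^ 2)) ∈ S :=
    ⟨v, h, hmemh, hformh, hv0, rfl⟩
  have hmle : m ≤ ∫ x in Set.Ioo (0:ℝ) 1, (φ (v x) + c * h x ^ 2) := by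
    rw [hm]; exact csInf_le hSbdd hRS
  have hgoal : (∫ x in Set.Ioo (0:ℝ) 1, (φ (w x) + c * g x ^ 2)) ≤ m := by
    have hJw : (∫ x in Set.Ioo (0:ℝ) 1, (φ (w x) + c * g x ^ 2)) =
        (∫ x in Set.Ioo (0:ℝ) 1, φ (w x)) + c * ‖G‖ ^ 2 := by
      rw [J_split hφ hgmem hformw c, integral_sq_eq_norm hgmem, hgtoLp]
    rw [hJw]
    refine le_of_forall_pos_le_add ?_
    intro ε hε
    -- constants
    set M : ℝ := |d| + R with hM
    set L : ℝ := max M 1 with hL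
    have hLpos : 0 < L := lt_of_lt_of_le one_pos (le_max_right _ _)
    have hMnonneg : 0 ≤ M := by rw [hM]; positivity
    set N : ℕ := ⌈(8 * L * R / ε) ^ 2⌉₊ + 1 with hN
    have hNpos : 0 < N := Nat.succ_pos _
    have hNR : (0:ℝ) < N := Nat.cast_pos.mpr hNpos
    have hNge : ((8 * L * R / ε) ^ 2 : ℝ) ≤ N := by
      have h1 := Nat.le_ceil ((8 * L * R / ε) ^ 2)
      have h2 : ((⌈(8 * L * R / ε) ^ 2⌉₊ : ℝ)) ≤ ((⌈(8 * L * R / ε) ^ 2⌉₊ + 1 : ℕ) : ℝ) := by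
        push_cast; linarith
      exact le_trans h1 h2
    have hsN : 8 * L * R / ε ≤ Real.sqrt N := by
      rw [show (8 * L * R / ε) = Real.sqrt ((8 * L * R / ε) ^ 2) from
        (Real.sqrt_sq (by positivity)).symm]
      exact Real.sqrt_le_sqrt hNge
    have hsNpos : 0 < Real.sqrt N := Real.sqrt_pos.2 hNR
    have hsqrt1N : L * (2 * R) * Real.sqrt (1 / N) ≤ ε / 4 := by
      have e1 : Real.sqrt (1 / (N:ℝ)) = (Real.sqrt N)⁻¹ := by
        rw [one_div, Real.sqrt_inv]
      rw [e1]
      rw [mul_inv_le_iff₀ hsNpos]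
      have h2 : 8 * L * R ≤ ε * Real.sqrt N := by
        rw [div_le_iff₀ hε] at hsN
        linarith
      nlinarith
    set δ : ℝ := ε / (8 * L) with hδ
    have hδpos : 0 < δ := by positivity
    set δ2 : ℝ := ε / (8 * c) with hδ2
    have hδ2pos : 0 < δ2 := by rw [hδ2]; positivity
    set xi : ℕ → ℝ := fun i => (i : ℝ) / N with hxi
    set U : Set (WeakDual ℝ Hsp) :=
      (⋂ i ∈ Finset.range (N+1),
        {ℓ' : WeakDual ℝ Hsp | |ℓ' (ind (xi i)) - ℓ (ind (xi i))| < δ}) ∩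
      {ℓ' : WeakDual ℝ Hsp | |ℓ' G - ℓ G| < δ2} with hU
    have hUopen : IsOpen U := by
      refine IsOpen.inter (isOpen_biInter_finset fun i _ => ?_) ?_
      · have hcont : Continuous fun ℓ' : WeakDual ℝ Hsp => |ℓ' (ind (xi i)) - ℓ (ind (xi i))| :=
          ((WeakDual.eval_continuous (ind (xi i))).sub continuous_const).abs
        exact isOpen_lt hcont continuous_const
      · have hcont : Continuous fun ℓ' : WeakDual ℝ Hsp => |ℓ' G - ℓ G| :=
          ((WeakDual.eval_continuous G).sub continuous_const).abs
        exact isOpen_lt hcont continuous_const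
    have hℓU : ℓ ∈ U := by
      constructor
      · refine Set.mem_iInter₂.2 fun i _ => ?_
        simp [hδpos]
      · simp [hδ2pos]
    have hUnhds : U ∈ nhds ℓ := hUopen.mem_nhds hℓU
    have hfreq : ∃ᶠ n in atTop, ℓn n ∈ U := (mapClusterPt_iff_frequently.mp hcl) U hUnhds
    have hev : ∀ᶠ n : ℕ in atTop, 1/((n:ℝ)+1) < ε/4 := by
      filter_upwards [Filter.eventually_ge_atTop ⌈(4:ℝ)/ε⌉₊] with n hn
      have h1 : (4:ℝ)/ε ≤ ⌈(4:ℝ)/ε⌉₊ := Nat.le_ceil _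
      have h2 : ((⌈(4:ℝ)/ε⌉₊ : ℕ) : ℝ) ≤ n := Nat.cast_le.2 hn
      rw [div_lt_iff₀ (by positivity)]
      have h3 : (4:ℝ)/ε ≤ n := le_trans h1 h2
      rw [div_le_iff₀ hε] at h3
      nlinarith
    obtain ⟨n, hnU, hn4⟩ := (hfreq.and_eventually hev).exists
    -- identities for w and the competitor (pq n)
    have hwx : ∀ x ∈ Set.Icc (0:ℝ) 1, w x = d + ℓ (ind x) := by
      intro x hx
      rw [hwdef]
      simp only
      rw [primitive_eq_inner hgmem hx, hgtoLp, real_inner_comm, hGap]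
    have hvx : ∀ x ∈ Set.Icc (0:ℝ) 1,
        (pq n).1 x = d + ⟪ind x, Hn n⟫_ℝ := by
      intro x hx
      rw [hformn n x hx, h0n n, primitive_eq_inner (hmemn n) hx]
    set ℓd : StrongDual ℝ Hsp :=
      WeakDual.toStrongDual ℓ - InnerProductSpace.toDual ℝ Hsp (Hn n) with hℓd
    have hℓdnorm : ‖ℓd‖ ≤ 2 * R := by
      rw [hℓd]
      calc ‖WeakDual.toStrongDual ℓ - InnerProductSpace.toDual ℝ Hsp (Hn n)‖
          ≤ ‖WeakDual.toStrongDual ℓ‖ + ‖InnerProductSpace.toDual ℝ Hsp (Hn n)‖ := norm_sub_le _ _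
        _ ≤ R + R := add_le_add hℓR (by rw [(InnerProductSpace.toDual ℝ Hsp).norm_map]; exact hHnR n)
        _ = 2 * R := by ring
    have hℓdapp : ∀ u : Hsp, ℓd u = ℓ u - ⟪Hn n, u⟫_ℝ := by
      intro u
      rw [hℓd, ContinuousLinearMap.sub_apply, InnerProductSpace.toDual_apply_apply]
      rfl
    have hDwv : ∀ x ∈ Set.Icc (0:ℝ) 1, w x - (pq n).1 x = ℓd (ind x) := by
      intro x hx
      rw [hwx x hx, hvx x hx, hℓdapp, real_inner_comm]
      ring
    have hHold : ∀ y x : ℝ, 0 ≤ y → y ≤ x → x ≤ 1 →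
        |ℓd (ind x) - ℓd (ind y)| ≤ (2*R) * Real.sqrt (x - y) := by
      intro y x hy0 hyx hx1
      rw [← map_sub]
      calc |ℓd (ind x - ind y)| = ‖ℓd (ind x - ind y)‖ := (Real.norm_eq_abs _).symm
        _ ≤ ‖ℓd‖ * ‖ind x - ind y‖ := ℓd.le_opNorm _
        _ ≤ (2*R) * Real.sqrt (x - y) := by
            rw [norm_ind_sub hy0 hyx hx1]
            exact mul_le_mul_of_nonneg_right hℓdnorm (Real.sqrt_nonneg _)
    have hgrid : ∀ i : ℕ, i ≤ N → |ℓd (ind (xi i))| ≤ δ := by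
      intro i hi
      have h1 := Set.mem_iInter₂.1 hnU.1 i (Finset.mem_range.2 (Nat.lt_succ_of_le hi))
      have h2 : ℓn n (ind (xi i)) = ⟪Hn n, ind (xi i)⟫_ℝ := by
        rw [hℓn]
        exact InnerProductSpace.toDual_apply_apply
      rw [Set.mem_setOf_eq, h2] at h1
      rw [hℓdapp]
      rw [abs_sub_comm] at h1
      exact le_of_lt h1
    have hDx : ∀ x ∈ Set.Icc (0:ℝ) 1, |ℓd (ind x)| ≤ δ + (2*R) * Real.sqrt (1/N) := by
      intro x hx
      have h0 : ℓd (ind ((0:ℕ):ℝ)) = ℓd (ind 0) := by norm_num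
      refine grid_bound hNpos (by positivity) hHold ?_ hx
      intro i hi
      have := hgrid i hi
      rwa [hxi] at this
    -- pointwise bounds
    have hwb : ∀ x ∈ Set.Icc (0:ℝ) 1, |w x| ≤ M := by
      intro x hx
      rw [hwx x hx, ← hGap]
      calc |d + ⟪G, ind x⟫_ℝ| ≤ |d| + |⟪G, ind x⟫_ℝ| := abs_add_le _ _
        _ ≤ |d| + ‖G‖ * ‖ind x‖ := add_le_add le_rfl (abs_real_inner_le_norm _ _)
        _ ≤ |d| + R * 1 := by
            refine add_le_add le_rfl (mul_le_mul hGnorm (norm_ind_le_one hx.1 hx.2)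
              (norm_nonneg _) hRpos.le)
        _ = M := by rw [hM]; ring
    have hvb : ∀ x ∈ Set.Icc (0:ℝ) 1, |(pq n).1 x| ≤ M := by
      intro x hx
      rw [hvx x hx]
      calc |d + ⟪ind x, Hn n⟫_ℝ| ≤ |d| + |⟪ind x, Hn n⟫_ℝ| := abs_add_le _ _
        _ ≤ |d| + ‖ind x‖ * ‖Hn n‖ := add_le_add le_rfl (abs_real_inner_le_norm _ _)
        _ ≤ |d| + 1 * R := add_le_add le_rfl
            (mul_le_mul (norm_ind_le_one hx.1 hx.2) (hHnR n) (norm_nonneg _) zero_le_one)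
        _ = M := by rw [hM]; ring
    -- φ-part comparison
    have hphi : (∫ x in Set.Ioo (0:ℝ) 1, φ (w x)) ≤
        (∫ x in Set.Ioo (0:ℝ) 1, φ ((pq n).1 x)) + (ε/8 + ε/4) := by
      have hint1 : Integrable (fun x => φ (w x)) μ01 := integrable_phi_v hφ hgmem hformw
      have hint2 : Integrable (fun x => φ ((pq n).1 x)) μ01 :=
        integrable_phi_v hφ (hmemn n) (hformn n)
      have hmono : ∀ᵐ x ∂μ01, φ (w x) ≤ φ ((pq n).1 x) + (ε/8 + ε/4) := by
        filter_upwards [ae_restrict_mem measurableSet_Ioo] with x hx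
        have hx' : x ∈ Set.Icc (0:ℝ) 1 := Set.Ioo_subset_Icc_self hx
        have h1 := phi_lip hφ (hwb x hx') (hvb x hx')
        have h2 : |w x - (pq n).1 x| ≤ δ + (2*R) * Real.sqrt (1/N) := by
          rw [hDwv x hx']
          exact hDx x hx'
        have h3 : L * |w x - (pq n).1 x| ≤ L * δ + L * (2*R) * Real.sqrt (1/N) := by
          nlinarith [mul_le_mul_of_nonneg_left h2 hLpos.le]
        have hL0 : L ≠ 0 := ne_of_gt hLpos
        have h4 : L * δ = ε/8 := by
          rw [hδ]
          field_simp
        have h5 := le_abs_self (φ (w x) - φ ((pq n).1 x))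
        have h6 : L * (2*R) * Real.sqrt (1/N) ≤ ε/4 := hsqrt1N
        rw [← hL] at h1
        nlinarith [h1, h3, h5]
      calc (∫ x in Set.Ioo (0:ℝ) 1, φ (w x))
          ≤ ∫ x in Set.Ioo (0:ℝ) 1, (φ ((pq n).1 x) + (ε/8 + ε/4)) :=
            integral_mono_ae hint1 (hint2.add (integrable_const _)) hmono
        _ = (∫ x in Set.Ioo (0:ℝ) 1, φ ((pq n).1 x)) + (ε/8 + ε/4) := by
            rw [integral_add hint2 (integrable_const _)]
            simp
    -- norm-part comparison
    have hnormcmp : c * ‖G‖ ^ 2 ≤ c * ‖Hn n‖ ^ 2 + ε/4 := by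
      have hbase : ‖G‖ ^ 2 ≤ ‖Hn n‖ ^ 2 + 2 * (⟪G, G⟫_ℝ - ⟪G, Hn n⟫_ℝ) := by
        have := norm_sub_sq_real G (Hn n)
        have h0 : (0:ℝ) ≤ ‖G - Hn n‖ ^ 2 := sq_nonneg _
        have hGG : ⟪G, G⟫_ℝ = ‖G‖ ^ 2 := real_inner_self_eq_norm_sq G
        linarith
      have hinner : ⟪G, G⟫_ℝ - ⟪G, Hn n⟫_ℝ < δ2 := by
        have h1 := hnU.2
        rw [Set.mem_setOf_eq] at h1
        have h2 : ℓn n G = ⟪Hn n, G⟫_ℝ := by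
          rw [hℓn]
          exact InnerProductSpace.toDual_apply_apply
        rw [h2] at h1
        have h3 : ⟪G, G⟫_ℝ = ℓ G := hGap G
        have h4 : ⟪G, Hn n⟫_ℝ = ⟪Hn n, G⟫_ℝ := real_inner_comm _ _
        rw [h3, h4]
        have := abs_lt.1 h1
        linarith [this.1]
      have hc0 : c ≠ 0 := ne_of_gt hcpos
      have h5 : 2 * c * δ2 = ε/4 := by
        rw [hδ2]
        field_simp
        ring
      have h6 : c * ‖G‖ ^ 2 ≤ c * ‖Hn n‖ ^ 2 + 2 * (c * (⟪G, G⟫_ℝ - ⟪G, Hn n⟫_ℝ)) := by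
        have hmul := mul_le_mul_of_nonneg_left hbase hcpos.le
        have he : c * (‖Hn n‖ ^ 2 + 2 * (⟪G, G⟫_ℝ - ⟪G, Hn n⟫_ℝ))
            = c * ‖Hn n‖ ^ 2 + 2 * (c * (⟪G, G⟫_ℝ - ⟪G, Hn n⟫_ℝ)) := by ring
        linarith [hmul, he.le, he.ge]
      have h7 : c * (⟪G, G⟫_ℝ - ⟪G, Hn n⟫_ℝ) ≤ c * δ2 :=
        mul_le_mul_of_nonneg_left hinner.le hcpos.le
      have h8 : 2 * (c * δ2) = ε/4 := by linarith [h5, (by ring : 2 * (c * δ2) = 2 * c * δ2)]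
      linarith [h6, h7, h8]
    -- assemble
    have hval := hvaln n
    rw [hJn n] at hval
    calc (∫ x in Set.Ioo (0:ℝ) 1, φ (w x)) + c * ‖G‖ ^ 2
        ≤ ((∫ x in Set.Ioo (0:ℝ) 1, φ ((pq n).1 x)) + (ε/8 + ε/4)) +
          (c * ‖Hn n‖ ^ 2 + ε/4) := add_le_add hphi hnormcmp
      _ ≤ m + ε := by linarith [hval, hn4, hε]
  calc (∫ x in Set.Ioo (0:ℝ) 1, (φ (w x) + c * g x ^ 2)) ≤ m := hgoal
    _ ≤ _ := hmle

end Main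
end

section
/- Suppose w ∈ H¹(0,1) with w(0) = d < 1 is a local minimizer (in H¹ norm) of J(w) = ∫₀¹(φ(w) + ½ν²|w'|²)dx with φ(s) = ½s² for s < 1 and ½ for s ≥ 1. Then the set {x : w(x) > 1} is empty. -/
open MeasureTheory Filter Topology intervalIntegral

private theorem stmt13_aux_arith (t M G I δ : ℝ) (ht0 : 0 < t) (ht2 : t^2 ≤ t)
    (hI0 : 0 ≤ I) (hIG : I ≤ G) (htD : t * (M^2 + G + δ^2) = δ^2) :
    t^2 * M^2 + t^2 * I ≤ δ^2 := by
  nlinarith [mul_nonneg (sub_nonneg.mpr ht2) (sq_nonneg M),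
    mul_nonneg (sub_nonneg.mpr ht2) hI0,
    mul_nonneg ht0.le (sub_nonneg.mpr hIG),
    mul_nonneg ht0.le (sq_nonneg δ)]

set_option maxHeartbeats 2000000 in
/-- If `w ∈ H¹(0,1)` with `w(0) = d < 1` is a local minimizer (in `H¹` norm) of
`J(w) = ∫₀¹ (φ(w) + ½ν²|w'|²)` with `φ(s) = ½s²` for `s < 1` and `φ(s) = ½`
for `s ≥ 1`, then the set `{x ∈ [0,1] : w(x) > 1}` is empty. An `H¹(0,1)`
function is encoded as a pair `(w, g)` with `g ∈ L²(0,1)` and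
`w(x) = w(0) + ∫₀ˣ g` on `[0,1]`; the `H¹` distance of `(w,g)` and `(v,h)` is
`(∫₀¹ ((w-v)² + (g-h)²))^(1/2)`. -/
theorem stmt_13 (ν : ℝ) (hν : 0 < ν) (d : ℝ) (hd : d < 1)
    (φ : ℝ → ℝ) (hφ : ∀ s : ℝ, φ s = if s < 1 then s ^ 2 / 2 else 1 / 2)
    (w g : ℝ → ℝ)
    (hg : MemLp g 2 (volume.restrict (Set.Ioo (0:ℝ) 1)))
    (hw : ∀ x ∈ Set.Icc (0:ℝ) 1, w x = w 0 + ∫ t in (0:ℝ)..x, g t)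
    (hbc : w 0 = d)
    (hmin : ∃ δ : ℝ, 0 < δ ∧
      ∀ v h : ℝ → ℝ,
        MemLp h 2 (volume.restrict (Set.Ioo (0:ℝ) 1)) →
        (∀ x ∈ Set.Icc (0:ℝ) 1, v x = v 0 + ∫ t in (0:ℝ)..x, h t) →
        v 0 = d →
        (∫ x in Set.Ioo (0:ℝ) 1, ((w x - v x) ^ 2 + (g x - h x) ^ 2)) ≤ δ ^ 2 →
        (∫ x in Set.Ioo (0:ℝ) 1, (φ (w x) + ν ^ 2 / 2 * (g x) ^ 2)) ≤
          ∫ x in Set.Ioo (0:ℝ) 1, (φ (v x) + ν ^ 2 / 2 * (h x) ^ 2)) :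
    {x ∈ Set.Icc (0:ℝ) 1 | 1 < w x} = ∅ := by
  obtain ⟨δ, hδ, hmin⟩ := hmin
  by_contra hne
  rw [Set.eq_empty_iff_forall_notMem] at hne
  push_neg at hne
  obtain ⟨x₀, hx₀I, hx₀w⟩ := hne
  -- basic integrability
  have hg1 : IntegrableOn g (Set.Ioo (0:ℝ) 1) := hg.integrable (by norm_num)
  have hgIcc : IntegrableOn g (Set.Icc (0:ℝ) 1) :=
    (integrableOn_Icc_iff_integrableOn_Ioo).mpr hg1
  have hgiv : ∀ u v : ℝ, u ∈ Set.Icc (0:ℝ) 1 → v ∈ Set.Icc (0:ℝ) 1 →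
      IntervalIntegrable g volume u v := by
    intro u v hu hv
    exact (hgIcc.mono_set (Set.uIcc_subset_Icc hu hv)).intervalIntegrable
  -- continuous representative W
  set W : ℝ → ℝ := fun x => d + ∫ t in (0:ℝ)..(min (max x 0) 1), g t with hWdef
  have hWcont : Continuous W := by
    have hprim : ContinuousOn (fun x => ∫ t in (0:ℝ)..x, g t) (Set.Icc (0:ℝ) 1) := by
      have h2 : IntegrableOn g (Set.uIcc (0:ℝ) 1) := by
        rwa [Set.uIcc_of_le (zero_le_one' ℝ)]
      simpa [Set.uIcc_of_le (zero_le_one' ℝ)] using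
        intervalIntegral.continuousOn_primitive_interval h2
    apply continuous_const.add
    apply hprim.comp_continuous ((continuous_id.max continuous_const).min continuous_const)
    intro x
    exact ⟨le_min (le_max_right x 0) zero_le_one, min_le_right _ _⟩
  have hwW : ∀ x ∈ Set.Icc (0:ℝ) 1, w x = W x := by
    intro x hx
    have hcx : min (max x 0) 1 = x := by
      rw [max_eq_left hx.1, min_eq_left hx.2]
    rw [hw x hx, hbc, hWdef]
    simp only [hcx]
  have hWx₀ : 1 < W x₀ := by rw [← hwW x₀ hx₀I]; exact hx₀w
  have hW0 : W 0 = d := by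
    have h0 : min (max (0:ℝ) 0) 1 = 0 := by norm_num
    rw [hWdef]; simp only [h0, intervalIntegral.integral_same, add_zero]
  -- the left crossing point a
  set SA := Set.Icc (0:ℝ) x₀ ∩ {x | W x ≤ 1} with hSAdef
  have hSAne : SA.Nonempty := ⟨0, ⟨le_refl 0, hx₀I.1⟩, by rw [Set.mem_setOf_eq, hW0]; exact hd.le⟩
  have hSAc : IsCompact SA := by
    apply isCompact_Icc.of_isClosed_subset
    · exact isClosed_Icc.inter (isClosed_le hWcont continuous_const)
    · exact fun x hx => hx.1
  set a := sSup SA with hadef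
  have haSA : a ∈ SA := hSAc.sSup_mem hSAne
  have ha0 : 0 ≤ a := haSA.1.1
  have haW : W a ≤ 1 := haSA.2
  have hax₀ : a < x₀ := lt_of_le_of_ne haSA.1.2 (fun h => by
    rw [h] at haW; exact absurd hWx₀ (not_lt.mpr haW))
  have haI : a ∈ Set.Icc (0:ℝ) 1 := ⟨ha0, haSA.1.2.trans hx₀I.2⟩
  have hgt : ∀ x, a < x → x ≤ x₀ → 1 < W x := by
    intro x h1 h2
    by_contra hle
    push_neg at hle
    exact absurd (le_csSup hSAc.bddAbove ⟨⟨ha0.trans h1.le, h2⟩, hle⟩) (not_le.mpr h1)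
  have hWa : W a = 1 := by
    by_contra hne'
    have hlt : W a < 1 := lt_of_le_of_ne haW hne'
    have hop : IsOpen {x : ℝ | W x < 1} := isOpen_lt hWcont continuous_const
    obtain ⟨ε, hε, hball⟩ := Metric.isOpen_iff.mp hop a hlt
    set x := min (a + ε/2) ((a + x₀)/2) with hxdef
    have hx1 : a < x := lt_min (by linarith) (by linarith)
    have hx2 : x ≤ x₀ := (min_le_right _ _).trans (by linarith)
    have hx3 : x ∈ Metric.ball a ε := by
      rw [Real.ball_eq_Ioo]
      constructor
      · linarith
      · calc x ≤ a + ε/2 := min_le_left _ _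
          _ < a + ε := by linarith
    exact absurd (hball hx3) (not_lt.mpr (hgt x hx1 hx2).le)
  -- the right crossing point b
  set SB := (Set.Icc x₀ 1 ∩ {x | W x ≤ 1}) ∪ {1} with hSBdef
  have hSBne : SB.Nonempty := ⟨1, Or.inr rfl⟩
  have hSBc : IsCompact SB := by
    apply IsCompact.union _ isCompact_singleton
    apply isCompact_Icc.of_isClosed_subset
    · exact isClosed_Icc.inter (isClosed_le hWcont continuous_const)
    · exact fun x hx => hx.1
  set b := sInf SB with hbdef
  have hbSB : b ∈ SB := hSBc.sInf_mem hSBne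
  have hblb : x₀ ≤ b := by
    apply le_csInf hSBne
    intro y hy
    rcases hy with h | h
    · exact h.1.1
    · rw [Set.mem_singleton_iff] at h; rw [h]; exact hx₀I.2
  have hb1 : b ≤ 1 := csInf_le hSBc.bddBelow (Or.inr rfl)
  have hab : a < b := hax₀.trans_le hblb
  have hbI : b ∈ Set.Icc (0:ℝ) 1 := ⟨ha0.trans hab.le, hb1⟩
  have hgt2 : ∀ x, x₀ ≤ x → x < b → 1 < W x := by
    intro x h1 h2
    by_contra hle
    push_neg at hle
    have hx1 : x < 1 := h2.trans_le hb1
    exact absurd (csInf_le hSBc.bddBelow (Or.inl ⟨⟨h1, hx1.le⟩, hle⟩)) (not_le.mpr h2)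
  have hmid : ∀ x ∈ Set.Ioo a b, 1 < W x := by
    intro x hx
    rcases le_or_gt x x₀ with h | h
    · exact hgt x hx.1 h
    · exact hgt2 x h.le hx.2
  have hWb : b < 1 → W b = 1 := by
    intro hblt
    have hWble : W b ≤ 1 := by
      rcases hbSB with h | h
      · exact h.2
      · rw [Set.mem_singleton_iff] at h; exact absurd h (by linarith)
    by_contra hne'
    have hlt : W b < 1 := lt_of_le_of_ne hWble hne'
    have hop : IsOpen {x : ℝ | W x < 1} := isOpen_lt hWcont continuous_const
    obtain ⟨ε, hε, hball⟩ := Metric.isOpen_iff.mp hop b hlt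
    set x := max ((a + b)/2) (b - ε/2) with hxdef
    have hx1 : a < x := lt_of_lt_of_le (by linarith) (le_max_left _ _)
    have hx2 : x < b := max_lt (by linarith) (by linarith)
    have hx3 : x ∈ Metric.ball b ε := by
      rw [Real.ball_eq_Ioo]
      constructor
      · calc b - ε < b - ε/2 := by linarith
          _ ≤ x := le_max_right _ _
      · linarith
    exact absurd (hball hx3) (not_lt.mpr (hmid x ⟨hx1, hx2⟩).le)
  -- translate back to w
  have hwa : w a = 1 := (hwW a haI).trans hWa
  have hwb : b < 1 → w b = 1 := fun hb => (hwW b hbI).trans (hWb hb)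
  have hmidw : ∀ x ∈ Set.Ioo a b, 1 < w x := by
    intro x hx
    have hxI : x ∈ Set.Icc (0:ℝ) 1 :=
      ⟨ha0.trans hx.1.le, hx.2.le.trans hb1⟩
    rw [hwW x hxI]; exact hmid x hx
  have hwIcc : ∀ x ∈ Set.Icc (0:ℝ) 1, w x = d + ∫ s in (0:ℝ)..x, g s := by
    intro x hx; rw [hw x hx, hbc]
  clear_value W SA SB a b
  -- the perturbation
  set ind := (Set.Ioo a b).indicator g with hinddef
  have hindsub : Set.Ioo a b ⊆ Set.Ioo (0:ℝ) 1 :=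
    fun x hx => ⟨lt_of_le_of_lt ha0 hx.1, lt_of_lt_of_le hx.2 hb1⟩
  have hindIcc : IntegrableOn ind (Set.Icc (0:ℝ) 1) := hgIcc.indicator measurableSet_Ioo
  have hindiv : ∀ u v : ℝ, u ∈ Set.Icc (0:ℝ) 1 → v ∈ Set.Icc (0:ℝ) 1 →
      IntervalIntegrable ind volume u v := by
    intro u v hu hv
    exact (hindIcc.mono_set (Set.uIcc_subset_Icc hu hv)).intervalIntegrable
  set G := ∫ x in Set.Ioo (0:ℝ) 1, g x ^ 2 with hGdef
  have hG0 : 0 ≤ G := setIntegral_nonneg measurableSet_Ioo (fun x _ => sq_nonneg _)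
  set M := ∫ x in Set.Icc (0:ℝ) 1, |g x| with hMdef
  have hM0 : 0 ≤ M := setIntegral_nonneg measurableSet_Icc (fun x _ => abs_nonneg _)
  have hden : 0 < M^2 + G + δ^2 := by positivity
  set t := δ^2 / (M^2 + G + δ^2) with htdef
  have ht0 : 0 < t := div_pos (by positivity) hden
  have ht1 : t ≤ 1 := by
    rw [div_le_one hden]; nlinarith [sq_nonneg M]
  have htD : t * (M^2 + G + δ^2) = δ^2 := by
    rw [htdef]; field_simp
  have ht2le : t^2 ≤ t := by nlinarith
  set h : ℝ → ℝ := fun x => g x - t * ind x with hhdef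
  set v : ℝ → ℝ := fun x => d + ∫ s in (0:ℝ)..x, h s with hvdef
  have hhL2 : MemLp h 2 (volume.restrict (Set.Ioo (0:ℝ) 1)) :=
    hg.sub ((hg.indicator measurableSet_Ioo).const_mul t)
  have hv0 : v 0 = d := by
    simp only [hvdef, intervalIntegral.integral_same, add_zero]
  have hvh : ∀ x ∈ Set.Icc (0:ℝ) 1, v x = v 0 + ∫ s in (0:ℝ)..x, h s := by
    intro x hx
    rw [hv0]
  set P : ℝ → ℝ := fun x => ∫ s in (0:ℝ)..x, ind s with hPdef
  have hvw : ∀ x ∈ Set.Icc (0:ℝ) 1, v x = w x - t * P x := by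
    intro x hx
    have h1 : IntervalIntegrable g volume 0 x := hgiv 0 x ⟨le_rfl, zero_le_one⟩ hx
    have h2 : IntervalIntegrable (fun s => t * ind s) volume 0 x :=
      (hindiv 0 x ⟨le_rfl, zero_le_one⟩ hx).const_mul t
    have hsplit : (∫ s in (0:ℝ)..x, h s)
        = (∫ s in (0:ℝ)..x, g s) - t * ∫ s in (0:ℝ)..x, ind s := by
      rw [hhdef]
      rw [intervalIntegral.integral_sub h1 h2, intervalIntegral.integral_const_mul]
    rw [hvdef]
    simp only [hsplit, hwIcc x hx, hPdef]
    ring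
  -- values of P
  have hPa : ∀ x ∈ Set.Icc (0:ℝ) 1, x ≤ a → P x = 0 := by
    intro x hx hxa
    have heq : Set.EqOn ind (fun _ => (0:ℝ)) (Set.uIcc 0 x) := by
      intro y hy
      rw [Set.uIcc_of_le hx.1] at hy
      exact Set.indicator_of_notMem
        (fun hmem => absurd hmem.1 (not_lt.mpr (hy.2.trans hxa))) g
    rw [hPdef]
    simp only [intervalIntegral.integral_congr heq, intervalIntegral.integral_zero]
  have hbae : ∀ᵐ (y : ℝ), y ≠ b := by
    have hb0 : volume {y : ℝ | ¬ y ≠ b} = 0 := by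
      simp only [ne_eq, not_not, Set.setOf_eq_eq_singleton]
      exact measure_singleton b
    exact ae_iff.mpr hb0
  have hPab : ∀ x ∈ Set.Icc (0:ℝ) 1, a < x → x ≤ b → P x = w x - 1 := by
    intro x hx hax hxb
    have e1 : P x = P a + ∫ s in a..x, ind s :=
      (intervalIntegral.integral_add_adjacent_intervals
        (hindiv 0 a ⟨le_rfl, zero_le_one⟩ haI) (hindiv a x haI hx)).symm
    have e2 : P a = 0 := hPa a haI le_rfl
    have e3 : (∫ s in a..x, ind s) = ∫ s in a..x, g s := by
      apply intervalIntegral.integral_congr_ae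
      filter_upwards [hbae] with y hy hmem
      rw [Set.uIoc_of_le hax.le] at hmem
      exact Set.indicator_of_mem
        (Set.mem_Ioo.mpr ⟨hmem.1, lt_of_le_of_ne (hmem.2.trans hxb) hy⟩) g
    have e4 : (∫ s in a..x, g s) = w x - w a := by
      have e5 := intervalIntegral.integral_add_adjacent_intervals
        (hgiv 0 a ⟨le_rfl, zero_le_one⟩ haI) (hgiv a x haI hx)
      rw [hwIcc x hx, hwIcc a haI]
      linarith
    rw [e1, e2, e3, e4, hwa]
    ring
  have hPb : ∀ x ∈ Set.Icc (0:ℝ) 1, b ≤ x → x < 1 → P x = 0 := by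
    intro x hx hbx hx1
    have hwb1 : w b = 1 := hwb (lt_of_le_of_lt hbx hx1)
    have e1 : P b = 0 := by
      rw [hPab b hbI hab le_rfl, hwb1]; ring
    have e3 : (∫ s in b..x, ind s) = 0 := by
      have heq : Set.EqOn ind (fun _ => (0:ℝ)) (Set.uIcc b x) := by
        intro y hy
        rw [Set.uIcc_of_le hbx] at hy
        exact Set.indicator_of_notMem
          (fun hmem => absurd hmem.2 (not_lt.mpr hy.1)) g
      simp only [intervalIntegral.integral_congr heq, intervalIntegral.integral_zero]
    have e0 : P x = P b + ∫ s in b..x, ind s :=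
      (intervalIntegral.integral_add_adjacent_intervals
        (hindiv 0 b ⟨le_rfl, zero_le_one⟩ hbI) (hindiv b x hbI hx)).symm
    rw [e0, e1, e3, add_zero]
  -- P is bounded by M
  have hindabs : ∀ y, |ind y| ≤ |g y| := by
    intro y
    by_cases hy : y ∈ Set.Ioo a b
    · simp [hinddef, Set.indicator_of_mem hy]
    · simp [hinddef, Set.indicator_of_notMem hy]
  have hPM : ∀ x ∈ Set.Icc (0:ℝ) 1, P x ^ 2 ≤ M ^ 2 := by
    intro x hx
    have h1 : |P x| ≤ M := by
      have s1 : |P x| ≤ ∫ s in (0:ℝ)..x, |ind s| :=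
        intervalIntegral.abs_integral_le_integral_abs hx.1
      have s2 : (∫ s in (0:ℝ)..x, |ind s|) = ∫ s in Set.Ioc 0 x, |ind s| :=
        intervalIntegral.integral_of_le hx.1
      have s3 : (∫ s in Set.Ioc 0 x, |ind s|) ≤ ∫ s in Set.Icc (0:ℝ) 1, |ind s| := by
        apply setIntegral_mono_set hindIcc.abs
        · exact ae_of_all _ (fun y => abs_nonneg _)
        · exact HasSubset.Subset.eventuallyLE (Set.Ioc_subset_Icc_self.trans
            (Set.Icc_subset_Icc le_rfl hx.2))
      have s4 : (∫ s in Set.Icc (0:ℝ) 1, |ind s|) ≤ M := by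
        rw [hMdef]
        exact setIntegral_mono_on hindIcc.abs hgIcc.abs measurableSet_Icc
          (fun y _ => hindabs y)
      calc |P x| ≤ ∫ s in (0:ℝ)..x, |ind s| := s1
        _ = _ := s2
        _ ≤ _ := s3
        _ ≤ M := s4
    calc P x ^ 2 = |P x| ^ 2 := (sq_abs _).symm
      _ ≤ M ^ 2 := by nlinarith [abs_nonneg (P x)]
  -- integrability of ind^2
  have hg2 : IntegrableOn (fun x => g x ^ 2) (Set.Ioo (0:ℝ) 1) := hg.integrable_sq
  have hind2 : IntegrableOn (fun x => ind x ^ 2) (Set.Ioo (0:ℝ) 1) := by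
    have hfe : (fun x => ind x ^ 2) = (Set.Ioo a b).indicator (fun x => g x ^ 2) := by
      funext y
      by_cases hy : y ∈ Set.Ioo a b <;> simp [hinddef, hy]
    rw [hfe]
    exact hg2.indicator measurableSet_Ioo
  have hI0 : 0 ≤ ∫ x in Set.Ioo (0:ℝ) 1, ind x ^ 2 :=
    setIntegral_nonneg measurableSet_Ioo (fun x _ => sq_nonneg _)
  have hIleG : (∫ x in Set.Ioo (0:ℝ) 1, ind x ^ 2) ≤ G := by
    apply setIntegral_mono_on hind2 hg2 measurableSet_Ioo
    intro y _
    by_cases hy : y ∈ Set.Ioo a b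
    · simp [hinddef, Set.indicator_of_mem hy]
    · simp only [hinddef, Set.indicator_of_notMem hy]
      simpa using sq_nonneg (g y)
  -- the distance bound
  have hPcont : ContinuousOn P (Set.Icc (0:ℝ) 1) := by
    have h2 : IntegrableOn ind (Set.uIcc (0:ℝ) 1) := by
      rwa [Set.uIcc_of_le (zero_le_one' ℝ)]
    simpa [hPdef, Set.uIcc_of_le (zero_le_one' ℝ)] using
      intervalIntegral.continuousOn_primitive_interval h2
  clear_value M G t
  have hdist : (∫ x in Set.Ioo (0:ℝ) 1, ((w x - v x) ^ 2 + (g x - h x) ^ 2)) ≤ δ ^ 2 := by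
    have hcong : Set.EqOn (fun x => (w x - v x) ^ 2 + (g x - h x) ^ 2)
        (fun x => t^2 * P x ^ 2 + t^2 * ind x ^ 2) (Set.Ioo (0:ℝ) 1) := by
      intro x hx
      have hxI : x ∈ Set.Icc (0:ℝ) 1 := Set.Ioo_subset_Icc_self hx
      simp only
      rw [hvw x hxI]
      simp only [hhdef]
      ring
    rw [setIntegral_congr_fun measurableSet_Ioo hcong]
    have hPint : IntegrableOn (fun x => t^2 * P x ^ 2 + t^2 * ind x ^ 2) (Set.Ioo (0:ℝ) 1) := by
      apply Integrable.add
      · have hc : ContinuousOn (fun x => t^2 * P x ^ 2) (Set.Icc (0:ℝ) 1) :=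
          continuousOn_const.mul (hPcont.pow 2)
        have hic : IntegrableOn (fun x => t^2 * P x ^ 2) (Set.Icc (0:ℝ) 1) volume :=
          hc.integrableOn_Icc
        exact hic.mono_set Set.Ioo_subset_Icc_self
      · exact hind2.const_mul _
    have hcInt : IntegrableOn (fun _ : ℝ => t^2 * M^2) (Set.Ioo (0:ℝ) 1) :=
      (integrableOn_const_iff).mpr (Or.inr (by simp [Real.volume_Ioo]))
    have e1 : (∫ x in Set.Ioo (0:ℝ) 1, (t^2 * P x ^ 2 + t^2 * ind x ^ 2))
        ≤ ∫ x in Set.Ioo (0:ℝ) 1, (t^2 * M ^ 2 + t^2 * ind x ^ 2) := by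
      apply setIntegral_mono_on hPint (hcInt.add (hind2.const_mul _)) measurableSet_Ioo
      intro x hx
      have hble := hPM x (Set.Ioo_subset_Icc_self hx)
      exact add_le_add_left (mul_le_mul_of_nonneg_left hble (sq_nonneg t)) _
    have e2 : (∫ x in Set.Ioo (0:ℝ) 1, (t^2 * M ^ 2 + t^2 * ind x ^ 2))
        = t^2 * M^2 + t^2 * ∫ x in Set.Ioo (0:ℝ) 1, ind x ^ 2 := by
      rw [MeasureTheory.integral_add hcInt (hind2.const_mul _), setIntegral_const,
        MeasureTheory.integral_const_mul]
      simp [Real.volume_Ioo]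
    have e3 : t^2 * M^2 + t^2 * (∫ x in Set.Ioo (0:ℝ) 1, ind x ^ 2) ≤ δ^2 :=
      stmt13_aux_arith t M G _ δ ht0 ht2le hI0 hIleG htD
    exact (e1.trans_eq e2).trans e3
  -- apply local minimality
  have hres := hmin v h hhL2 hvh hv0 hdist
  have hgind : ∀ x, g x * ind x = ind x ^ 2 := by
    intro x
    by_cases hy : x ∈ Set.Ioo a b
    · simp only [hinddef, Set.indicator_of_mem hy]; ring
    · simp [hinddef, Set.indicator_of_notMem hy]
  have hφveq : Set.EqOn (fun x => φ (v x) + ν ^ 2 / 2 * (h x) ^ 2)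
      (fun x => (φ (w x) + ν ^ 2 / 2 * (g x) ^ 2) - (ν^2/2 * (2*t - t^2)) * ind x ^ 2)
      (Set.Ioo (0:ℝ) 1) := by
    intro x hx
    have hxI : x ∈ Set.Icc (0:ℝ) 1 := Set.Ioo_subset_Icc_self hx
    have hφeq : φ (v x) = φ (w x) := by
      rcases le_or_gt x a with hxa | hxa
      · have hvx : v x = w x := by rw [hvw x hxI, hPa x hxI hxa]; ring
        rw [hvx]
      · rcases le_or_gt x b with hxb | hxb
        · rcases eq_or_lt_of_le hxb with heq | hlt
          · have hwx1 : w x = 1 := by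
              rw [heq]; exact hwb (by rw [← heq]; exact hx.2)
            have hvx : v x = w x := by
              rw [hvw x hxI, hPab x hxI hxa hxb, hwx1]; ring
            rw [hvx]
          · have h1 : 1 < w x := hmidw x ⟨hxa, hlt⟩
            have hv1 : (1:ℝ) ≤ v x := by
              have hge : (0:ℝ) ≤ w x - 1 := by linarith
              have hmul : t * (w x - 1) ≤ 1 * (w x - 1) :=
                mul_le_mul_of_nonneg_right ht1 hge
              rw [hvw x hxI, hPab x hxI hxa hxb]
              linarith [hmul]
            rw [hφ (v x), hφ (w x), if_neg (not_lt.mpr hv1), if_neg (not_lt.mpr h1.le)]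
        · have hvx : v x = w x := by
            rw [hvw x hxI, hPb x hxI hxb.le hx.2]; ring
          rw [hvx]
    have hh2 : h x ^ 2 = g x ^ 2 - (2*t - t^2) * ind x ^ 2 := by
      show (g x - t * ind x) ^ 2 = _
      linear_combination (-2*t) * hgind x
    simp only
    rw [hφeq, hh2]
    ring
  rw [setIntegral_congr_fun measurableSet_Ioo hφveq] at hres
  clear_value ind P h v
  have hφwInt : IntegrableOn (fun x => φ (w x)) (Set.Ioo (0:ℝ) 1) := by
    have hφmin : ∀ s : ℝ, φ s = (min s 1) ^ 2 / 2 := by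
      intro s
      rw [hφ s]
      split_ifs with hs
      · rw [min_eq_left hs.le]
      · rw [min_eq_right (not_lt.mp hs)]; norm_num
    have hWc : Continuous (fun x => (min (W x) 1) ^ 2 / 2) :=
      ((hWcont.min continuous_const).pow 2).div_const 2
    have hWint : IntegrableOn (fun x => (min (W x) 1) ^ 2 / 2) (Set.Icc (0:ℝ) 1) volume :=
      hWc.integrableOn_Icc
    apply (hWint.mono_set Set.Ioo_subset_Icc_self).congr_fun _ measurableSet_Ioo
    intro x hx
    show (min (W x) 1) ^ 2 / 2 = φ (w x)
    rw [hφmin (w x), hwW x (Set.Ioo_subset_Icc_self hx)]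
  have hsumInt : IntegrableOn (fun x => φ (w x) + ν ^ 2 / 2 * (g x) ^ 2) (Set.Ioo (0:ℝ) 1) :=
    hφwInt.add (hg2.const_mul _)
  rw [MeasureTheory.integral_sub hsumInt (hind2.const_mul _),
    MeasureTheory.integral_const_mul] at hres
  have hEq2 : Set.EqOn (fun x => ind x ^ 2)
      (fun x => (Set.Ioo a b).indicator (fun y => g y ^ 2) x) (Set.Ioo (0:ℝ) 1) := by
    intro x _
    by_cases hy : x ∈ Set.Ioo a b <;> simp [hinddef, hy]
  have hIeq : (∫ x in Set.Ioo (0:ℝ) 1, ind x ^ 2) = ∫ x in Set.Ioo a b, g x ^ 2 := by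
    rw [setIntegral_congr_fun measurableSet_Ioo hEq2,
      setIntegral_indicator measurableSet_Ioo,
      Set.inter_eq_self_of_subset_right hindsub]
  have hIpos : 0 < ∫ x in Set.Ioo a b, g x ^ 2 := by
    rcases lt_or_eq_of_le (setIntegral_nonneg measurableSet_Ioo
      (fun x _ => sq_nonneg (g x))) with hpos | heq
    · exact hpos
    · exfalso
      have hginteg : IntegrableOn (fun x => g x ^ 2) (Set.Ioo a b) := hg2.mono_set hindsub
      have hae : (fun x => g x ^ 2) =ᵐ[volume.restrict (Set.Ioo a b)] 0 :=
        (integral_eq_zero_iff_of_nonneg_ae (ae_of_all _ (fun x => sq_nonneg (g x)))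
          hginteg).mp heq.symm
      have hae2 : g =ᵐ[volume.restrict (Set.Ioo a x₀)] 0 := by
        apply ae_restrict_of_ae_restrict_of_subset (Set.Ioo_subset_Ioo le_rfl hblb)
        filter_upwards [hae] with x hx
        simp only [Pi.zero_apply] at hx ⊢
        exact pow_eq_zero_iff (by norm_num) |>.mp hx
      have hint0 : (∫ s in a..x₀, g s) = 0 := by
        rw [intervalIntegral.integral_of_le hax₀.le, integral_Ioc_eq_integral_Ioo]
        exact integral_eq_zero_of_ae hae2
      have hadd := intervalIntegral.integral_add_adjacent_intervals
        (hgiv 0 a ⟨le_rfl, zero_le_one⟩ haI) (hgiv a x₀ haI hx₀I)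
      have hwx0 : w x₀ = w a := by
        rw [hwIcc x₀ hx₀I, hwIcc a haI, ← hadd, hint0, add_zero]
      rw [hwa] at hwx0
      exact absurd hx₀w (by rw [hwx0]; exact lt_irrefl 1)
  have hcpos : 0 < ν ^ 2 / 2 * (2*t - t^2) := by
    have h2t : 0 < 2*t - t^2 := by
      calc (0:ℝ) < t * (2 - t) := mul_pos ht0 (by linarith)
        _ = 2*t - t^2 := by ring
    have hν2 : 0 < ν ^ 2 / 2 := by positivity
    exact mul_pos hν2 h2t
  rw [hIeq] at hres
  exact absurd (le_sub_self_iff _ |>.mp hres) (not_le.mpr (mul_pos hcpos hIpos))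
end

section
/- Suppose w ∈ H¹(0,1) with w(0) = d > 1 is a local minimizer of J(w) = ∫₀¹(φ(w) + ½ν²|w'|²)dx. Then {x ∈ [0,1] : w(x) > 1} is either all of [0,1] or an interval of the form [0,ζ) (equivalently (0,ζ] up to the endpoint with w(ζ)=1) for some ζ ∈ (0,1); in particular it cannot have a connected component (α,1] with w(α) = 1 nor an interior component (β,γ) with w(β) = w(γ) = 1. -/
open MeasureTheory Filter Topology intervalIntegral

set_option maxHeartbeats 1000000

lemma phi_half {φ : ℝ → ℝ} (hφ : ∀ s : ℝ, φ s = if s < 1 then s ^ 2 / 2 else 1 / 2)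
    {s : ℝ} (hs : 1 ≤ s) : φ s = 1/2 := by rw [hφ]; simp [not_lt.2 hs]

lemma key_lemma (ν δ : ℝ) (hν : 0 < ν) (hδ : 0 < δ) (d : ℝ)
    (φ : ℝ → ℝ) (hφ : ∀ s : ℝ, φ s = if s < 1 then s ^ 2 / 2 else 1 / 2)
    (w g : ℝ → ℝ)
    (hg : MemLp g 2 (volume.restrict (Set.Ioo (0:ℝ) 1)))
    (hw : ∀ x ∈ Set.Icc (0:ℝ) 1, w x = w 0 + ∫ t in (0:ℝ)..x, g t)
    (hbc : w 0 = d)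
    (hmin : ∀ v h : ℝ → ℝ,
        MemLp h 2 (volume.restrict (Set.Ioo (0:ℝ) 1)) →
        (∀ x ∈ Set.Icc (0:ℝ) 1, v x = v 0 + ∫ t in (0:ℝ)..x, h t) →
        v 0 = d →
        (∫ x in Set.Ioo (0:ℝ) 1, ((w x - v x) ^ 2 + (g x - h x) ^ 2)) ≤ δ ^ 2 →
        (∫ x in Set.Ioo (0:ℝ) 1, (φ (w x) + ν ^ 2 / 2 * (g x) ^ 2)) ≤
          ∫ x in Set.Ioo (0:ℝ) 1, (φ (v x) + ν ^ 2 / 2 * (h x) ^ 2))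
    (a b : ℝ) (ha : 0 ≤ a) (hab : a < b) (hb : b ≤ 1)
    (hge : ∀ x ∈ Set.Icc a b, 1 ≤ w x)
    (hmatch : w b = w a ∨ b = 1) :
    ∀ x ∈ Set.Icc a b, w x = w a := by
  have hsub : Set.Ioo a b ⊆ Set.Ioo (0:ℝ) 1 := fun y hy =>
    ⟨lt_of_le_of_lt ha hy.1, lt_of_lt_of_le hy.2 hb⟩
  have hgint : IntegrableOn g (Set.Ioo (0:ℝ) 1) volume := hg.integrable (by norm_num)
  have hg2int : IntegrableOn (fun x => g x ^ 2) (Set.Ioo (0:ℝ) 1) volume := hg.integrable_sq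
  have hgIcc : IntegrableOn g (Set.Icc (0:ℝ) 1) volume :=
    (integrableOn_Icc_iff_integrableOn_Ioo).2 hgint
  -- interval integrability of g on subintervals of [0,1]
  have hgiv : ∀ p q : ℝ, p ∈ Set.Icc (0:ℝ) 1 → q ∈ Set.Icc (0:ℝ) 1 →
      IntervalIntegrable g volume p q := by
    intro p q hp hq
    exact (hgIcc.mono_set (Set.uIcc_subset_Icc hp hq)).intervalIntegrable
  -- the indicator function
  set Gi : ℝ → ℝ := (Set.Ioo a b).indicator g with hGi
  have hGiint : IntegrableOn Gi (Set.Ioo (0:ℝ) 1) volume :=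
    hgint.indicator measurableSet_Ioo
  have hGiIcc : IntegrableOn Gi (Set.Icc (0:ℝ) 1) volume :=
    (integrableOn_Icc_iff_integrableOn_Ioo).2 hGiint
  have hGiiv : ∀ p q : ℝ, p ∈ Set.Icc (0:ℝ) 1 → q ∈ Set.Icc (0:ℝ) 1 →
      IntervalIntegrable Gi volume p q := by
    intro p q hp hq
    exact (hGiIcc.mono_set (Set.uIcc_subset_Icc hp hq)).intervalIntegrable
  set K : ℝ := ∫ x in Set.Ioo (0:ℝ) 1, |g x| with hK
  set E : ℝ := ∫ x in Set.Ioo (0:ℝ) 1, g x ^ 2 with hE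
  have hK0 : 0 ≤ K := setIntegral_nonneg measurableSet_Ioo (fun x _ => abs_nonneg _)
  have hE0 : 0 ≤ E := setIntegral_nonneg measurableSet_Ioo (fun x _ => sq_nonneg _)
  set M : ℝ := K ^ 2 + E with hM
  have hM0 : 0 ≤ M := by positivity
  set t : ℝ := min (1/2) (δ / (M + 1)) with ht
  have ht0 : 0 < t := lt_min (by norm_num) (div_pos hδ (by linarith))
  have ht1 : t < 1 := lt_of_le_of_lt (min_le_left _ _) (by norm_num)
  have htδ : t * (M + 1) ≤ δ := by
    have := min_le_right (1/2 : ℝ) (δ / (M + 1))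
    calc t * (M + 1) ≤ (δ / (M + 1)) * (M + 1) := by
          apply mul_le_mul_of_nonneg_right this (by linarith)
      _ = δ := by field_simp
  set h : ℝ → ℝ := fun x => g x - t * Gi x with hh
  set v : ℝ → ℝ := fun x => d + ∫ s in (0:ℝ)..x, h s with hv
  have hhmem : MemLp h 2 (volume.restrict (Set.Ioo (0:ℝ) 1)) :=
    hg.sub ((hg.indicator measurableSet_Ioo).const_mul t)
  have hv0 : v 0 = d := by simp [hv]
  have hvprop : ∀ x ∈ Set.Icc (0:ℝ) 1, v x = v 0 + ∫ s in (0:ℝ)..x, h s := by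
    intro x _; rw [hv0]
  -- formula for v - w
  have hvw : ∀ x ∈ Set.Icc (0:ℝ) 1, v x - w x =
      -t * ∫ s in Set.Ioc 0 x ∩ Set.Ioo a b, g s := by
    intro x hx
    have h1 : (∫ s in (0:ℝ)..x, h s) =
        (∫ s in (0:ℝ)..x, g s) - t * ∫ s in (0:ℝ)..x, Gi s := by
      rw [hh]
      rw [intervalIntegral.integral_sub (hgiv 0 x (by norm_num) hx)
        ((hGiiv 0 x (by norm_num) hx).const_mul t), intervalIntegral.integral_const_mul]
    have h2 : (∫ s in (0:ℝ)..x, Gi s) = ∫ s in Set.Ioc 0 x ∩ Set.Ioo a b, g s := by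
      rw [intervalIntegral.integral_of_le hx.1, hGi,
        setIntegral_indicator measurableSet_Ioo]
    simp only [hv]
    rw [hw x hx, hbc, h1, h2]; ring
  -- value of v on the three regions
  have hmid : ∀ x ∈ Set.Icc a b, v x = w x - t * (w x - w a) := by
    intro x hx
    have hxI : x ∈ Set.Icc (0:ℝ) 1 := ⟨le_trans ha hx.1, le_trans hx.2 hb⟩
    have haI : a ∈ Set.Icc (0:ℝ) 1 := ⟨ha, le_trans (le_of_lt hab) hb⟩
    have hseq : (Set.Ioc 0 x ∩ Set.Ioo a b : Set ℝ) =ᵐ[volume] Set.Ioc a x := by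
      rw [MeasureTheory.ae_eq_set]
      constructor
      · refine measure_mono_null (fun y hy => ?_) (measure_empty)
        exact absurd ⟨hy.1.2.1, hy.1.1.2⟩ hy.2
      · refine measure_mono_null (fun y hy => ?_) (measure_singleton b)
        simp only [Set.mem_diff, Set.mem_inter_iff, Set.mem_Ioc, Set.mem_Ioo] at hy ⊢
        rcases hy with ⟨⟨hay, hyx⟩, hn⟩
        by_contra hyb
        exact hn ⟨⟨lt_of_le_of_lt ha hay, hyx⟩, hay,
          lt_of_le_of_ne (le_trans hyx hx.2) hyb⟩
    have h3 : (∫ s in Set.Ioc 0 x ∩ Set.Ioo a b, g s) = ∫ s in a..x, g s := by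
      rw [setIntegral_congr_set hseq, intervalIntegral.integral_of_le hx.1]
    have h4 : (∫ s in a..x, g s) = w x - w a := by
      have := intervalIntegral.integral_interval_sub_left
        (hgiv 0 x (by norm_num) hxI) (hgiv 0 a (by norm_num) haI)
      rw [this.symm, hw x hxI, hw a haI]; ring
    have := hvw x hxI
    rw [h3, h4] at this; linarith
  have hlea : ∀ x ∈ Set.Icc (0:ℝ) 1, x ≤ a → v x = w x := by
    intro x hx hxa
    have : (Set.Ioc 0 x ∩ Set.Ioo a b : Set ℝ) = ∅ := by
      ext y; simp only [Set.mem_inter_iff, Set.mem_Ioc, Set.mem_Ioo, Set.mem_empty_iff_false,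
        iff_false, not_and]
      intro h1 h2; exact absurd (lt_of_le_of_lt (le_trans h1.2 hxa) h2) (lt_irrefl y).elim ∘ id
    have h5 := hvw x hx
    rw [this] at h5; simp at h5; linarith
  have hgeb : ∀ x ∈ Set.Icc (0:ℝ) 1, b ≤ x → v x = w x - t * (w b - w a) := by
    intro x hx hbx
    have haI : a ∈ Set.Icc (0:ℝ) 1 := ⟨ha, le_trans (le_of_lt hab) hb⟩
    have hbI : b ∈ Set.Icc (0:ℝ) 1 := ⟨le_trans ha (le_of_lt hab), hb⟩
    have hseteq : (Set.Ioc 0 x ∩ Set.Ioo a b : Set ℝ) = Set.Ioo a b := by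
      apply Set.inter_eq_self_of_subset_right
      intro y hy
      exact ⟨lt_of_le_of_lt ha hy.1, le_trans (le_of_lt hy.2) hbx⟩
    have hseq2 : (Set.Ioo a b : Set ℝ) =ᵐ[volume] Set.Ioc a b := MeasureTheory.Ioo_ae_eq_Ioc
    have h6 : (∫ s in Set.Ioc 0 x ∩ Set.Ioo a b, g s) = w b - w a := by
      rw [hseteq, setIntegral_congr_set hseq2, ← intervalIntegral.integral_of_le (le_of_lt hab)]
      have := intervalIntegral.integral_interval_sub_left
        (hgiv 0 b (by norm_num) hbI) (hgiv 0 a (by norm_num) haI)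
      rw [this.symm, hw b hbI, hw a haI]; ring
    have h7 := hvw x hx
    rw [h6] at h7; linarith
  -- φ(v) = φ(w) on [0,1]
  have hφeq : ∀ x ∈ Set.Icc (0:ℝ) 1, φ (v x) = φ (w x) := by
    intro x hx
    rcases le_or_gt x a with hxa | hax
    · rw [hlea x hx hxa]
    rcases le_or_gt x b with hxb | hbx
    · have hxab : x ∈ Set.Icc a b := ⟨le_of_lt hax, hxb⟩
      have h1 : 1 ≤ w x := hge x hxab
      have h2 : 1 ≤ w a := hge a ⟨le_refl a, le_of_lt hab⟩
      have hv1 : 1 ≤ v x := by rw [hmid x hxab]; nlinarith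
      rw [phi_half hφ hv1, phi_half hφ h1]
    · rcases hmatch with hm | hm
      · rw [hgeb x hx (le_of_lt hbx), hm]; ring_nf
      · exact absurd hbx (not_lt.2 (hm ▸ hx.2))
  -- closeness
  have hclose : (∫ x in Set.Ioo (0:ℝ) 1, ((w x - v x) ^ 2 + (g x - h x) ^ 2)) ≤ δ ^ 2 := by
    have hdom : ∀ x ∈ Set.Ioo (0:ℝ) 1,
        (w x - v x) ^ 2 + (g x - h x) ^ 2 ≤ t ^ 2 * K ^ 2 + t ^ 2 * g x ^ 2 := by
      intro x hx
      have hxI : x ∈ Set.Icc (0:ℝ) 1 := ⟨le_of_lt hx.1, le_of_lt hx.2⟩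
      have h1 : |∫ s in Set.Ioc 0 x ∩ Set.Ioo a b, g s| ≤ K := by
        calc |∫ s in Set.Ioc 0 x ∩ Set.Ioo a b, g s|
            ≤ ∫ s in Set.Ioc 0 x ∩ Set.Ioo a b, |g s| := by
              simpa [Real.norm_eq_abs] using
                MeasureTheory.norm_integral_le_integral_norm (μ := volume.restrict
                  (Set.Ioc 0 x ∩ Set.Ioo a b)) g
          _ ≤ K := by
              apply setIntegral_mono_set hgint.abs
              · exact Filter.Eventually.of_forall (fun y => abs_nonneg _)
              · exact HasSubset.Subset.eventuallyLE (fun y hy => hsub hy.2)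
      have h2 : (w x - v x) ^ 2 ≤ t ^ 2 * K ^ 2 := by
        have := hvw x hxI
        have habs : |w x - v x| ≤ t * K := by
          rw [abs_sub_comm, this, abs_mul, abs_neg, abs_of_pos ht0]
          exact mul_le_mul_of_nonneg_left h1 (le_of_lt ht0)
        nlinarith [abs_nonneg (w x - v x), sq_abs (w x - v x)]
      have h3 : (g x - h x) ^ 2 ≤ t ^ 2 * g x ^ 2 := by
        rw [hh]; simp only [sub_sub_cancel]
        rw [mul_pow]
        apply mul_le_mul_of_nonneg_left _ (sq_nonneg t)
        rw [hGi]
        by_cases hxab : x ∈ Set.Ioo a b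
        · rw [Set.indicator_of_mem hxab]
        · rw [Set.indicator_of_notMem hxab]
          simpa using sq_nonneg (g x)
      linarith
    have hint : Integrable (fun x => t ^ 2 * K ^ 2 + t ^ 2 * g x ^ 2)
        (volume.restrict (Set.Ioo (0:ℝ) 1)) :=
      (integrable_const _).add (hg2int.const_mul _)
    have h8 : (∫ x in Set.Ioo (0:ℝ) 1, ((w x - v x) ^ 2 + (g x - h x) ^ 2)) ≤
        ∫ x in Set.Ioo (0:ℝ) 1, (t ^ 2 * K ^ 2 + t ^ 2 * g x ^ 2) := by
      apply integral_mono_of_nonneg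
      · exact Filter.Eventually.of_forall (fun x => by positivity)
      · exact hint
      · exact (ae_restrict_iff' measurableSet_Ioo).2 (Filter.Eventually.of_forall hdom)
    have h9 : (∫ x in Set.Ioo (0:ℝ) 1, (t ^ 2 * K ^ 2 + t ^ 2 * g x ^ 2)) =
        t ^ 2 * K ^ 2 + t ^ 2 * E := by
      rw [MeasureTheory.integral_add (integrable_const _) (hg2int.const_mul _),
        setIntegral_const, MeasureTheory.integral_const_mul, Real.volume_real_Ioo]
      norm_num
      exact Or.inl hE.symm
    have hA0 : 0 ≤ t * (M + 1) := mul_nonneg (le_of_lt ht0) (by linarith)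
    have hA2 : (t * (M + 1)) ^ 2 ≤ δ ^ 2 := pow_le_pow_left₀ hA0 htδ 2
    have hmono : t ^ 2 * M ≤ (t * (M + 1)) ^ 2 := by
      have e1 : (t * (M + 1)) ^ 2 - t ^ 2 * M = t ^ 2 * (M ^ 2 + M + 1) := by ring
      have e2 : (0:ℝ) ≤ t ^ 2 * (M ^ 2 + M + 1) :=
        mul_nonneg (sq_nonneg t) (add_nonneg (add_nonneg (sq_nonneg M) hM0) zero_le_one)
      linarith
    have h10 : t ^ 2 * K ^ 2 + t ^ 2 * E ≤ δ ^ 2 := by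
      have hMe : t ^ 2 * M = t ^ 2 * K ^ 2 + t ^ 2 * E := by rw [hM]; ring
      linarith
    linarith
  -- energy comparison
  have hmain := hmin v h hhmem hvprop hv0 hclose
  set c : ℝ := ν ^ 2 / 2 * (t ^ 2 - 2 * t) with hc
  have hpt : ∀ x ∈ Set.Ioo (0:ℝ) 1,
      φ (v x) + ν ^ 2 / 2 * h x ^ 2 =
      (φ (w x) + ν ^ 2 / 2 * g x ^ 2) + c * (Set.Ioo a b).indicator (fun y => g y ^ 2) x := by
    intro x hx
    have hxI : x ∈ Set.Icc (0:ℝ) 1 := ⟨le_of_lt hx.1, le_of_lt hx.2⟩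
    rw [hφeq x hxI, hh]
    by_cases hxab : x ∈ Set.Ioo a b
    · rw [hGi]; simp only [Set.indicator_of_mem hxab]; ring
    · rw [hGi]; simp only [Set.indicator_of_notMem hxab]; ring
  -- integrability of the energy integrand
  have hφw_int : Integrable (fun x => φ (w x)) (volume.restrict (Set.Ioo (0:ℝ) 1)) := by
    set W : ℝ → ℝ := fun x => w 0 + ∫ s in (0:ℝ)..x, g s with hW
    have hWx : ∀ y, W y = w 0 + ∫ s in (0:ℝ)..y, g s := fun y => by rw [hW]
    have hWcont : ContinuousOn W (Set.Icc (0:ℝ) 1) := by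
      apply ContinuousOn.add continuousOn_const
      have := continuousOn_primitive_interval
        (f := g) (μ := volume) (a := (0:ℝ)) (b := 1)
        (by rw [Set.uIcc_of_le (by norm_num : (0:ℝ) ≤ 1)]; exact hgIcc)
      rwa [Set.uIcc_of_le (by norm_num : (0:ℝ) ≤ 1)] at this
    have hφm : Measurable φ := by
      have : φ = fun s => if s < 1 then s ^ 2 / 2 else 1 / 2 := funext hφ
      rw [this]
      exact Measurable.ite (measurableSet_lt measurable_id measurable_const)
        ((measurable_id.pow_const 2).div_const 2) measurable_const
    have hWmeas : AEMeasurable W (volume.restrict (Set.Ioo (0:ℝ) 1)) :=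
      (hWcont.mono Set.Ioo_subset_Icc_self).aemeasurable measurableSet_Ioo
    obtain ⟨C, hC⟩ := (isCompact_Icc (a := (0:ℝ)) (b := 1)).exists_bound_of_continuousOn hWcont
    have haesm : AEStronglyMeasurable (fun x => φ (w x)) (volume.restrict (Set.Ioo (0:ℝ) 1)) := by
      have h1 : AEMeasurable (fun x => φ (W x)) (volume.restrict (Set.Ioo (0:ℝ) 1)) :=
        hφm.comp_aemeasurable hWmeas
      have h2 : (fun x => φ (W x)) =ᵐ[volume.restrict (Set.Ioo (0:ℝ) 1)] (fun x => φ (w x)) := by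
        refine (ae_restrict_iff' measurableSet_Ioo).2 (Filter.Eventually.of_forall ?_)
        intro x hx
        show φ (W x) = φ (w x)
        rw [hWx x, ← hw x ⟨le_of_lt hx.1, le_of_lt hx.2⟩]
      exact (h1.congr h2).aestronglyMeasurable
    apply Integrable.mono' (integrable_const (1/2 + C ^ 2 / 2)) haesm
    refine (ae_restrict_iff' measurableSet_Ioo).2 (Filter.Eventually.of_forall ?_)
    intro x hx
    have hxI : x ∈ Set.Icc (0:ℝ) 1 := ⟨le_of_lt hx.1, le_of_lt hx.2⟩
    have hwW : w x = W x := hw x hxI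
    have hbd : |W x| ≤ C := by simpa [Real.norm_eq_abs] using hC x hxI
    have hC0 : (0:ℝ) ≤ C := le_trans (abs_nonneg _) hbd
    rw [Real.norm_eq_abs, hφ (w x), hwW]
    by_cases h1 : W x < 1
    · rw [if_pos h1]
      have h2 : W x ^ 2 ≤ C ^ 2 := sq_le_sq' (abs_le.1 hbd).1 (abs_le.1 hbd).2
      rw [abs_of_nonneg (by positivity : (0:ℝ) ≤ W x ^ 2 / 2)]
      show W x ^ 2 / 2 ≤ 1 / 2 + C ^ 2 / 2
      clear_value W
      linarith only [h2]
    · rw [if_neg h1]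
      rw [abs_of_nonneg (by norm_num : (0:ℝ) ≤ (1:ℝ)/2)]
      nlinarith
  have hfw_int : Integrable (fun x => φ (w x) + ν ^ 2 / 2 * g x ^ 2)
      (volume.restrict (Set.Ioo (0:ℝ) 1)) := hφw_int.add (hg2int.const_mul _)
  have hind2_int : Integrable ((Set.Ioo a b).indicator (fun y => g y ^ 2))
      (volume.restrict (Set.Ioo (0:ℝ) 1)) := hg2int.indicator measurableSet_Ioo
  have hEI : (∫ x in Set.Ioo (0:ℝ) 1, (φ (v x) + ν ^ 2 / 2 * h x ^ 2)) =
      (∫ x in Set.Ioo (0:ℝ) 1, (φ (w x) + ν ^ 2 / 2 * g x ^ 2)) +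
      c * ∫ x in Set.Ioo (0:ℝ) 1, (Set.Ioo a b).indicator (fun y => g y ^ 2) x := by
    rw [setIntegral_congr_fun measurableSet_Ioo hpt]
    rw [MeasureTheory.integral_add hfw_int (hind2_int.const_mul c),
      MeasureTheory.integral_const_mul]
  set EI : ℝ := ∫ x in Set.Ioo (0:ℝ) 1, (Set.Ioo a b).indicator (fun y => g y ^ 2) x with hEIdef
  have hEI0 : 0 ≤ EI :=
    setIntegral_nonneg measurableSet_Ioo
      (fun x _ => Set.indicator_nonneg (fun y _ => sq_nonneg _) x)
  have hcneg : c < 0 := by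
    have : t ^ 2 - 2 * t < 0 := by nlinarith
    have hν2 : 0 < ν ^ 2 / 2 := by positivity
    exact mul_neg_of_pos_of_neg hν2 this
  have hEIzero : EI = 0 := by
    rw [hEI] at hmain
    nlinarith
  -- g = 0 a.e. on Ioo a b
  have hgzero : ∀ᵐ y ∂volume, y ∈ Set.Ioo a b → g y = 0 := by
    have h1 : EI = ∫ x in Set.Ioo a b, g x ^ 2 := by
      rw [hEIdef, setIntegral_indicator measurableSet_Ioo,
        Set.inter_eq_self_of_subset_right hsub]
    have h2 : (∫ x in Set.Ioo a b, g x ^ 2) = 0 := by rw [← h1, hEIzero]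
    have h3 : (fun x => g x ^ 2) =ᵐ[volume.restrict (Set.Ioo a b)] 0 := by
      rw [← MeasureTheory.integral_eq_zero_iff_of_nonneg_ae
        (Filter.Eventually.of_forall (fun x => sq_nonneg _)) (hg2int.mono_set hsub)]
      exact h2
    have h4 := (ae_restrict_iff' measurableSet_Ioo).1 h3
    filter_upwards [h4] with y hy hymem
    have := hy hymem
    simpa using pow_eq_zero_iff (n := 2) (by norm_num) |>.1 this
  -- conclude
  intro x hx
  have hxI : x ∈ Set.Icc (0:ℝ) 1 := ⟨le_trans ha hx.1, le_trans hx.2 hb⟩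
  have haI : a ∈ Set.Icc (0:ℝ) 1 := ⟨ha, le_trans (le_of_lt hab) hb⟩
  have h4 : (∫ s in a..x, g s) = w x - w a := by
    have := intervalIntegral.integral_interval_sub_left
      (hgiv 0 x (by norm_num) hxI) (hgiv 0 a (by norm_num) haI)
    rw [this.symm, hw x hxI, hw a haI]; ring
  have hne : ∀ᵐ y ∂volume, y ≠ x := by
    have : volume ({x} : Set ℝ) = 0 := measure_singleton x
    rw [MeasureTheory.ae_iff]
    convert this using 2
    ext y; simp
  have h5 : (∫ s in a..x, g s) = 0 := by
    rw [intervalIntegral.integral_of_le hx.1]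
    have hae2 : ∀ᵐ y ∂volume.restrict (Set.Ioc a x), g y = 0 := by
      refine (ae_restrict_iff' measurableSet_Ioc).2 ?_
      filter_upwards [hgzero, hne] with y hy hyne hymem
      refine hy ⟨hymem.1, ?_⟩
      rcases lt_or_eq_of_le hymem.2 with h' | h'
      · exact lt_of_lt_of_le h' hx.2
      · exact absurd h' hyne
    calc (∫ s in Set.Ioc a x, g s) = ∫ s in Set.Ioc a x, (0:ℝ) :=
          MeasureTheory.integral_congr_ae hae2
      _ = 0 := by simp
  linarith [h4.symm.trans h5]

/-- If `w ∈ H¹(0,1)` with `w(0) = d > 1` is a local minimizer (in `H¹` norm) of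
`J(w) = ∫₀¹ (φ(w) + ½ν²|w'|²)` with `φ(s) = ½s²` for `s < 1` and `φ(s) = ½`
for `s ≥ 1`, then the debonded set `{x ∈ [0,1] : w(x) > 1}` is either all of
`[0,1]` or an interval `[0,ζ)` with `ζ ∈ (0,1)` and `w(ζ) = 1`. An `H¹(0,1)`
function is encoded as a pair `(w, g)` with `g ∈ L²(0,1)` and
`w(x) = w(0) + ∫₀ˣ g` on `[0,1]`. -/
theorem stmt_14 (ν : ℝ) (hν : 0 < ν) (d : ℝ) (hd : 1 < d)
    (φ : ℝ → ℝ) (hφ : ∀ s : ℝ, φ s = if s < 1 then s ^ 2 / 2 else 1 / 2)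
    (w g : ℝ → ℝ)
    (hg : MemLp g 2 (volume.restrict (Set.Ioo (0:ℝ) 1)))
    (hw : ∀ x ∈ Set.Icc (0:ℝ) 1, w x = w 0 + ∫ t in (0:ℝ)..x, g t)
    (hbc : w 0 = d)
    (hmin : ∃ δ : ℝ, 0 < δ ∧
      ∀ v h : ℝ → ℝ,
        MemLp h 2 (volume.restrict (Set.Ioo (0:ℝ) 1)) →
        (∀ x ∈ Set.Icc (0:ℝ) 1, v x = v 0 + ∫ t in (0:ℝ)..x, h t) →
        v 0 = d →
        (∫ x in Set.Ioo (0:ℝ) 1, ((w x - v x) ^ 2 + (g x - h x) ^ 2)) ≤ δ ^ 2 →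
        (∫ x in Set.Ioo (0:ℝ) 1, (φ (w x) + ν ^ 2 / 2 * (g x) ^ 2)) ≤
          ∫ x in Set.Ioo (0:ℝ) 1, (φ (v x) + ν ^ 2 / 2 * (h x) ^ 2)) :
    {x ∈ Set.Icc (0:ℝ) 1 | 1 < w x} = Set.Icc (0:ℝ) 1 ∨
    ∃ ζ ∈ Set.Ioo (0:ℝ) 1, w ζ = 1 ∧
      {x ∈ Set.Icc (0:ℝ) 1 | 1 < w x} = Set.Ico (0:ℝ) ζ := by
  obtain ⟨δ, hδ, hmin⟩ := hmin
  have key := key_lemma ν δ hν hδ d φ hφ w g hg hw hbc hmin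
  -- continuity of w on [0,1]
  have hgint : IntegrableOn g (Set.Ioo (0:ℝ) 1) volume := hg.integrable (by norm_num)
  have hgIcc : IntegrableOn g (Set.Icc (0:ℝ) 1) volume :=
    (integrableOn_Icc_iff_integrableOn_Ioo).2 hgint
  have hWcont : ContinuousOn w (Set.Icc (0:ℝ) 1) := by
    have h1 : ContinuousOn (fun x => w 0 + ∫ s in (0:ℝ)..x, g s) (Set.Icc (0:ℝ) 1) := by
      apply ContinuousOn.add continuousOn_const
      have := continuousOn_primitive_interval (f := g) (μ := volume) (a := (0:ℝ)) (b := 1)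
        (by rw [Set.uIcc_of_le (by norm_num : (0:ℝ) ≤ 1)]; exact hgIcc)
      rwa [Set.uIcc_of_le (by norm_num : (0:ℝ) ≤ 1)] at this
    exact h1.congr hw
  -- the closed set where w ≥ 1
  set C1 : Set ℝ := Set.Icc (0:ℝ) 1 ∩ w ⁻¹' Set.Ici 1 with hC1def
  have hC1closed : IsClosed C1 :=
    hWcont.preimage_isClosed_of_isClosed isClosed_Icc isClosed_Ici
  by_cases hall : ∀ x ∈ Set.Icc (0:ℝ) 1, 1 < w x
  · left
    ext x
    simp only [Set.mem_setOf_eq]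
    exact ⟨fun h => h.1, fun h => ⟨h, hall x h⟩⟩
  · push_neg at hall
    set S : Set ℝ := Set.Icc (0:ℝ) 1 ∩ w ⁻¹' Set.Iic 1 with hSdef
    have hSclosed : IsClosed S :=
      hWcont.preimage_isClosed_of_isClosed isClosed_Icc isClosed_Iic
    have hSne : S.Nonempty := by
      obtain ⟨x, hx1, hx2⟩ := hall
      exact ⟨x, hx1, hx2⟩
    have hSbdd : BddBelow S := bddBelow_Icc.mono Set.inter_subset_left
    set ζ : ℝ := sInf S with hζdef
    have hζS : ζ ∈ S := hSclosed.csInf_mem hSne hSbdd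
    have hζI : ζ ∈ Set.Icc (0:ℝ) 1 := hζS.1
    have hwζ : w ζ ≤ 1 := hζS.2
    have hζpos : 0 < ζ := by
      rcases eq_or_lt_of_le hζI.1 with h0 | h0
      · exfalso; rw [← h0] at hwζ; rw [hbc] at hwζ; linarith
      · exact h0
    have hlt : ∀ x : ℝ, 0 ≤ x → x < ζ → 1 < w x := by
      intro x hx0 hxζ
      by_contra hc
      push_neg at hc
      have hxS : x ∈ S := ⟨⟨hx0, le_trans (le_of_lt hxζ) hζI.2⟩, hc⟩
      exact absurd (csInf_le hSbdd hxS) (not_le.2 hxζ)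
    have hwζ1 : w ζ = 1 := by
      refine le_antisymm hwζ ?_
      have hsubC : Set.Ico (0:ℝ) ζ ⊆ C1 := by
        intro y hy
        exact ⟨⟨hy.1, le_trans (le_of_lt hy.2) hζI.2⟩, le_of_lt (hlt y hy.1 hy.2)⟩
      have hζcl : ζ ∈ closure (Set.Ico (0:ℝ) ζ) := by
        rw [closure_Ico (ne_of_lt hζpos)]
        exact ⟨le_of_lt hζpos, le_refl ζ⟩
      have : ζ ∈ C1 := hC1closed.closure_subset ((closure_mono hsubC) hζcl)
      exact this.2
    rcases eq_or_lt_of_le hζI.2 with hζ1 | hζ1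
    · -- ζ = 1 : contradiction via key lemma on [0,1]
      exfalso
      have hge : ∀ x ∈ Set.Icc (0:ℝ) 1, 1 ≤ w x := by
        intro x hx
        rcases lt_or_eq_of_le (hζ1 ▸ hx.2 : x ≤ ζ) with h | h
        · exact le_of_lt (hlt x hx.1 h)
        · rw [h]; exact hwζ1.ge
      have h1 := key 0 1 le_rfl one_pos le_rfl hge (Or.inr rfl) 1 ⟨zero_le_one, le_rfl⟩
      have h2 : w 1 = 1 := hζ1 ▸ hwζ1
      rw [h2, hbc] at h1
      linarith
    · right
      refine ⟨ζ, ⟨hζpos, hζ1⟩, hwζ1, ?_⟩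
      ext x
      simp only [Set.mem_setOf_eq, Set.mem_Ico]
      constructor
      · rintro ⟨hxI, hxw⟩
        refine ⟨hxI.1, ?_⟩
        by_contra hxg
        push_neg at hxg
        have hζx : ζ < x := lt_of_le_of_ne hxg (fun h => by rw [← h, hwζ1] at hxw; linarith)
        -- α = last point ≤ x where w ≤ 1
        set T : Set ℝ := Set.Icc ζ x ∩ w ⁻¹' Set.Iic 1 with hTdef
        have hTclosed : IsClosed T :=
          (hWcont.mono (Set.Icc_subset_Icc hζI.1 hxI.2)).preimage_isClosed_of_isClosed
            isClosed_Icc isClosed_Iic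
        have hTne : T.Nonempty := ⟨ζ, ⟨le_refl ζ, le_of_lt hζx⟩, hwζ⟩
        have hTbdd : BddAbove T := bddAbove_Icc.mono Set.inter_subset_left
        set α : ℝ := sSup T with hαdef
        have hαT : α ∈ T := hTclosed.csSup_mem hTne hTbdd
        have hα0 : 0 ≤ α := le_trans hζI.1 hαT.1.1
        have hαx : α < x := lt_of_le_of_ne hαT.1.2 (fun h => by
          have := hαT.2; rw [h] at this; exact absurd hxw (not_lt.2 this))
        have hαgt : ∀ y : ℝ, α < y → y ≤ x → 1 < w y := by
          intro y h1 h2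
          by_contra hc
          push_neg at hc
          have : y ∈ T := ⟨⟨le_trans hαT.1.1 (le_of_lt h1), h2⟩, hc⟩
          exact absurd (le_csSup hTbdd this) (not_le.2 h1)
        have hα1 : w α = 1 := by
          refine le_antisymm hαT.2 ?_
          have hsubC : Set.Ioc α x ⊆ C1 := by
            intro y hy
            exact ⟨⟨le_trans hα0 (le_of_lt hy.1), le_trans hy.2 hxI.2⟩,
              le_of_lt (hαgt y hy.1 hy.2)⟩
          have hαcl : α ∈ closure (Set.Ioc α x) := by
            rw [closure_Ioc (ne_of_lt hαx)]
            exact ⟨le_refl α, le_of_lt hαx⟩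
          exact (hC1closed.closure_subset ((closure_mono hsubC) hαcl)).2
        by_cases hbig : ∃ y ∈ Set.Icc x 1, w y ≤ 1
        · -- interior component (α, β)
          set T' : Set ℝ := Set.Icc x 1 ∩ w ⁻¹' Set.Iic 1 with hT'def
          have hT'closed : IsClosed T' :=
            (hWcont.mono (Set.Icc_subset_Icc hxI.1 le_rfl)).preimage_isClosed_of_isClosed
              isClosed_Icc isClosed_Iic
          have hT'ne : T'.Nonempty := hbig
          have hT'bdd : BddBelow T' := bddBelow_Icc.mono Set.inter_subset_left
          set β : ℝ := sInf T' with hβdef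
          have hβT' : β ∈ T' := hT'closed.csInf_mem hT'ne hT'bdd
          have hβ1le : β ≤ 1 := hβT'.1.2
          have hxβ : x < β := lt_of_le_of_ne hβT'.1.1 (fun h => by
            have := hβT'.2; rw [← h] at this; exact absurd hxw (not_lt.2 this))
          have hmidgt : ∀ y : ℝ, x ≤ y → y < β → 1 < w y := by
            intro y h1 h2
            by_contra hc
            push_neg at hc
            have : y ∈ T' := ⟨⟨h1, le_trans (le_of_lt h2) hβ1le⟩, hc⟩
            exact absurd (csInf_le hT'bdd this) (not_le.2 h2)
          have hβ1 : w β = 1 := by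
            refine le_antisymm hβT'.2 ?_
            have hsubC : Set.Ico x β ⊆ C1 := by
              intro y hy
              exact ⟨⟨le_trans hxI.1 hy.1, le_trans (le_of_lt hy.2) hβ1le⟩,
                le_of_lt (hmidgt y hy.1 hy.2)⟩
            have hβcl : β ∈ closure (Set.Ico x β) := by
              rw [closure_Ico (ne_of_lt hxβ)]
              exact ⟨le_of_lt hxβ, le_refl β⟩
            exact (hC1closed.closure_subset ((closure_mono hsubC) hβcl)).2
          have hge2 : ∀ y ∈ Set.Icc α β, 1 ≤ w y := by
            intro y hy
            rcases eq_or_lt_of_le hy.1 with h | h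
            · rw [← h]; exact hα1.ge
            rcases le_or_gt y x with h2 | h2
            · exact le_of_lt (hαgt y h h2)
            rcases lt_or_eq_of_le hy.2 with h3 | h3
            · exact le_of_lt (hmidgt y (le_of_lt h2) h3)
            · rw [h3]; exact hβ1.ge
          have hkey := key α β hα0 (lt_trans hαx hxβ) hβ1le hge2
            (Or.inl (hβ1.trans hα1.symm)) x ⟨le_of_lt hαx, le_of_lt hxβ⟩
          rw [hα1] at hkey
          linarith
        · -- component (α, 1]
          push_neg at hbig
          have hge2 : ∀ y ∈ Set.Icc α 1, 1 ≤ w y := by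
            intro y hy
            rcases eq_or_lt_of_le hy.1 with h | h
            · rw [← h]; exact hα1.ge
            rcases le_or_gt y x with h2 | h2
            · exact le_of_lt (hαgt y h h2)
            · exact le_of_lt (hbig y ⟨le_of_lt h2, hy.2⟩)
          have hα1lt : α < 1 := lt_of_lt_of_le hαx hxI.2
          have hkey := key α 1 hα0 hα1lt le_rfl hge2 (Or.inr rfl) x
            ⟨le_of_lt hαx, hxI.2⟩
          rw [hα1] at hkey
          linarith
      · rintro ⟨hx0, hxζ⟩
        exact ⟨⟨hx0, le_trans (le_of_lt hxζ) hζI.2⟩, hlt x hx0 hxζ⟩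
end

section
/- For fixed ν > 0 and ζ ∈ (0,1), as n → ∞ both discrete stability thresholds converge to the continuum value: with ξ = ⌊ζn⌋ and η = η(n) > 0 solving cosh(η) = 1 + 1/(2n²ν²), one has d₁(ξ) → 1 + (ζ/ν)tanh((1-ζ)/ν) and d₂(ξ) → 1 + (ζ/ν)tanh((1-ζ)/ν); in particular nη(n) → 1/ν. -/
open Filter Topology

private lemma aux_add (a c K tt : ℝ) (ht : tt ≠ 0) :
    a / (c / tt * K + 1) = a * tt / (c * K + tt) := by
  rw [show c / tt * K + 1 = (c * K + tt) / tt by field_simp, div_div_eq_mul_div]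

private lemma aux_sub (a c K tt : ℝ) (ht : tt ≠ 0) :
    a / (c / tt * K - 1) = a * tt / (c * K - tt) := by
  rw [show c / tt * K - 1 = (c * K - tt) / tt by field_simp, div_div_eq_mul_div]

/-- Continuum limit of the discrete stability thresholds: fix `ν > 0` and
`ζ ∈ (0,1)`; for each `n` let `η(n) > 0` solve `cosh η = 1 + 1/(2n²ν²)` and
set `ξ(n) = ⌊ζn⌋`. Then `n·η(n) → 1/ν` and both
`d₁(ξ(n)) = 1 + 2(ξ-1)/(coth(η/2)coth((n-ξ+1)η) + 1)` and
`d₂(ξ(n)) = 1 + 2ξ/(coth(η/2)coth((n-ξ+1)η) - 1)` converge to the continuum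
value `d(ζ) = 1 + (ζ/ν)tanh((1-ζ)/ν)`. Here `coth x = cosh x / sinh x`. -/
theorem stmt_18 (ν : ℝ) (hν : 0 < ν) (ζ : ℝ) (hζ : ζ ∈ Set.Ioo (0:ℝ) 1)
    (η : ℕ → ℝ) (hη : ∀ n : ℕ, 1 ≤ n → 0 < η n ∧
      Real.cosh (η n) = 1 + 1 / (2 * (n : ℝ) ^ 2 * ν ^ 2))
    (ξ : ℕ → ℕ) (hξ : ∀ n : ℕ, ξ n = ⌊ζ * (n : ℝ)⌋₊) :
    Tendsto (fun n : ℕ => (n : ℝ) * η n) atTop (nhds (1 / ν)) ∧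
    Tendsto (fun n : ℕ =>
        1 + 2 * ((ξ n : ℝ) - 1) /
          ((Real.cosh (η n / 2) / Real.sinh (η n / 2)) *
            (Real.cosh (((n : ℝ) - (ξ n : ℝ) + 1) * η n) /
              Real.sinh (((n : ℝ) - (ξ n : ℝ) + 1) * η n)) + 1)) atTop
      (nhds (1 + ζ / ν * Real.tanh ((1 - ζ) / ν))) ∧
    Tendsto (fun n : ℕ =>
        1 + 2 * (ξ n : ℝ) /
          ((Real.cosh (η n / 2) / Real.sinh (η n / 2)) *
            (Real.cosh (((n : ℝ) - (ξ n : ℝ) + 1) * η n) /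
              Real.sinh (((n : ℝ) - (ξ n : ℝ) + 1) * η n)) - 1)) atTop
      (nhds (1 + ζ / ν * Real.tanh ((1 - ζ) / ν))) := by
  obtain ⟨hζ0, hζ1⟩ := hζ
  have hν' : ν ≠ 0 := hν.ne'
  set L : ℝ := (1 - ζ) / ν with hLdef
  have hLpos : 0 < L := div_pos (by linarith) hν
  set t : ℕ → ℝ := fun n => 1 / (2 * (n : ℝ) * ν) with htdef
  -- positivity of t
  have ht : ∀ n : ℕ, 1 ≤ n → 0 < t n := by
    intro n hn
    have hn0 : (0:ℝ) < n := by exact_mod_cast hn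
    have : (0:ℝ) < 2 * (n:ℝ) * ν := by positivity
    exact div_pos one_pos this
  -- t → 0
  have htend : Tendsto t atTop (𝓝 0) := by
    have h1 : Tendsto (fun n : ℕ => (1 / (2 * ν)) * (1 / (n:ℝ))) atTop (𝓝 ((1 / (2*ν)) * 0)) :=
      tendsto_one_div_atTop_nhds_zero_nat.const_mul _
    rw [mul_zero] at h1
    refine h1.congr fun n => ?_
    simp [htdef]
    ring
  -- sinh (η/2) = t
  have hs : ∀ n : ℕ, 1 ≤ n → Real.sinh (η n / 2) = t n := by
    intro n hn
    obtain ⟨hpos, hcosh⟩ := hη n hn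
    have hn0 : (0:ℝ) < n := by exact_mod_cast hn
    have h2 : Real.cosh (η n) = Real.cosh (η n / 2) ^ 2 + Real.sinh (η n / 2) ^ 2 := by
      rw [← Real.cosh_two_mul]; ring_nf
    have h3 : Real.cosh (η n / 2) ^ 2 = 1 + Real.sinh (η n / 2) ^ 2 := Real.cosh_sq' _
    have hsq : Real.sinh (η n / 2) ^ 2 = t n ^ 2 := by
      have ht2 : t n ^ 2 = 1 / (4 * (n:ℝ)^2 * ν^2) := by
        simp [htdef]; field_simp; ring
      rw [ht2]
      have hne : (2 * (n:ℝ)^2 * ν^2) ≠ 0 := by positivity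
      have hne2 : (4 * (n:ℝ)^2 * ν^2) ≠ 0 := by positivity
      have : 1 + 2 * Real.sinh (η n / 2) ^ 2 = 1 + 1 / (2 * (n:ℝ)^2 * ν^2) := by
        rw [← hcosh, h2, h3]; ring
      field_simp at this ⊢
      linarith
    have hsp : 0 < Real.sinh (η n / 2) := Real.sinh_pos_iff.mpr (by linarith)
    have htp : 0 < t n := ht n hn
    nlinarith [hsq, hsp, htp]
  -- cosh (η/2) = sqrt (1 + t^2)
  have hc : ∀ n : ℕ, 1 ≤ n → Real.cosh (η n / 2) = Real.sqrt (1 + t n ^ 2) := by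
    intro n hn
    rw [← hs n hn, ← Real.cosh_sq', Real.sqrt_sq (Real.cosh_pos _).le]
  -- ξ/n → ζ
  have hratio : Tendsto (fun n : ℕ => (ξ n : ℝ) / n) atTop (𝓝 ζ) := by
    have hg : Tendsto (fun n : ℕ => ζ - 1 / (n:ℝ)) atTop (𝓝 (ζ - 0)) :=
      tendsto_const_nhds.sub tendsto_one_div_atTop_nhds_zero_nat
    rw [sub_zero] at hg
    refine tendsto_of_tendsto_of_tendsto_of_le_of_le' hg tendsto_const_nhds ?_ ?_
    · filter_upwards [eventually_ge_atTop 1] with n hn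
      have hn0 : (0:ℝ) < n := by exact_mod_cast hn
      have h1 : ζ * n - 1 ≤ (ξ n : ℝ) := by
        rw [hξ n]; exact (Nat.sub_one_lt_floor _).le
      rw [sub_le_iff_le_add, ← add_div, le_div_iff₀ hn0]
      linarith
    · filter_upwards [eventually_ge_atTop 1] with n hn
      have hn0 : (0:ℝ) < n := by exact_mod_cast hn
      rw [div_le_iff₀ hn0, hξ n]
      exact Nat.floor_le (by positivity)
  -- n * η → 1/ν
  have hslope : Tendsto (fun n : ℕ => slope Real.arsinh 0 (t n)) atTop (𝓝 1) := by
    have hd : Tendsto (slope Real.arsinh 0) (𝓝[≠] (0:ℝ)) (𝓝 1) := by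
      have := hasDerivAt_iff_tendsto_slope.mp (Real.hasDerivAt_arsinh 0)
      simpa using this
    refine hd.comp ?_
    rw [tendsto_nhdsWithin_iff]
    refine ⟨htend, ?_⟩
    filter_upwards [eventually_ge_atTop 1] with n hn
    exact (ht n hn).ne'
  have hnη : Tendsto (fun n : ℕ => (n : ℝ) * η n) atTop (𝓝 (1 / ν)) := by
    have h1 : Tendsto (fun n : ℕ => (1/ν) * slope Real.arsinh 0 (t n)) atTop (𝓝 ((1/ν) * 1)) :=
      hslope.const_mul _
    rw [mul_one] at h1
    refine Tendsto.congr' ?_ h1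
    filter_upwards [eventually_ge_atTop 1] with n hn
    have hn0 : (0:ℝ) < n := by exact_mod_cast hn
    have htp := ht n hn
    have harsinh : Real.arsinh (t n) = η n / 2 := by
      rw [← hs n hn, Real.arsinh_sinh]
    rw [slope_def_field, Real.arsinh_zero, sub_zero, sub_zero, harsinh]
    simp only [htdef]
    field_simp
  -- B → L
  have hB : Tendsto (fun n : ℕ => ((n:ℝ) - (ξ n : ℝ) + 1) * η n) atTop (𝓝 L) := by
    have h1 : Tendsto (fun n : ℕ => (1 - (ξ n : ℝ)/n + 1/(n:ℝ)) * ((n:ℝ) * η n)) atTop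
        (𝓝 ((1 - ζ + 0) * (1/ν))) :=
      ((tendsto_const_nhds.sub hratio).add tendsto_one_div_atTop_nhds_zero_nat).mul hnη
    have h2 : (1 - ζ + 0) * (1/ν) = L := by rw [hLdef]; ring
    rw [h2] at h1
    refine Tendsto.congr' ?_ h1
    filter_upwards [eventually_ge_atTop 1] with n hn
    have hn0 : (0:ℝ) < n := by exact_mod_cast hn
    field_simp
  have hsinhLpos : 0 < Real.sinh L := Real.sinh_pos_iff.mpr hLpos
  -- K → coth L
  have hK : Tendsto (fun n : ℕ =>
      Real.cosh (((n:ℝ) - (ξ n : ℝ) + 1) * η n) / Real.sinh (((n:ℝ) - (ξ n : ℝ) + 1) * η n))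
      atTop (𝓝 (Real.cosh L / Real.sinh L)) :=
    ((Real.continuous_cosh.tendsto L).comp hB).div
      ((Real.continuous_sinh.tendsto L).comp hB) hsinhLpos.ne'
  -- sqrt(1+t²) → 1
  have hc1 : Tendsto (fun n : ℕ => Real.sqrt (1 + t n ^ 2)) atTop (𝓝 1) := by
    have h1 : Tendsto (fun n : ℕ => 1 + t n ^ 2) atTop (𝓝 (1 + 0^2)) :=
      tendsto_const_nhds.add (htend.pow 2)
    have := (Real.continuous_sqrt.tendsto _).comp h1
    simpa [Function.comp_def] using this
  have hcK : Tendsto (fun n : ℕ => Real.sqrt (1 + t n ^ 2) *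
      (Real.cosh (((n:ℝ) - (ξ n : ℝ) + 1) * η n) / Real.sinh (((n:ℝ) - (ξ n : ℝ) + 1) * η n)))
      atTop (𝓝 (Real.cosh L / Real.sinh L)) := by
    have := hc1.mul hK
    rwa [one_mul] at this
  have hcoshLpos := Real.cosh_pos L
  have hcothpos : 0 < Real.cosh L / Real.sinh L := div_pos hcoshLpos hsinhLpos
  -- numerators
  have hnum1 : Tendsto (fun n : ℕ => 2 * ((ξ n : ℝ) - 1) * t n) atTop (𝓝 (ζ / ν)) := by
    have h1 : Tendsto (fun n : ℕ => ((ξ n : ℝ)/n - 1/(n:ℝ)) * (1/ν)) atTop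
        (𝓝 ((ζ - 0) * (1/ν))) :=
      (hratio.sub tendsto_one_div_atTop_nhds_zero_nat).mul tendsto_const_nhds
    have h2 : (ζ - 0) * (1/ν) = ζ / ν := by ring
    rw [h2] at h1
    refine Tendsto.congr' ?_ h1
    filter_upwards [eventually_ge_atTop 1] with n hn
    have hn0 : (0:ℝ) < n := by exact_mod_cast hn
    simp only [htdef]
    field_simp
  have hnum2 : Tendsto (fun n : ℕ => 2 * (ξ n : ℝ) * t n) atTop (𝓝 (ζ / ν)) := by
    have h1 : Tendsto (fun n : ℕ => ((ξ n : ℝ)/n) * (1/ν)) atTop (𝓝 (ζ * (1/ν))) :=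
      hratio.mul tendsto_const_nhds
    have h2 : ζ * (1/ν) = ζ / ν := by ring
    rw [h2] at h1
    refine Tendsto.congr' ?_ h1
    filter_upwards [eventually_ge_atTop 1] with n hn
    have hn0 : (0:ℝ) < n := by exact_mod_cast hn
    simp only [htdef]
    field_simp
  -- final value identities
  have hval1 : 1 + (ζ/ν) / (Real.cosh L / Real.sinh L + 0) = 1 + ζ / ν * Real.tanh L := by
    rw [Real.tanh_eq_sinh_div_cosh, add_zero]
    field_simp
  have hval2 : 1 + (ζ/ν) / (Real.cosh L / Real.sinh L - 0) = 1 + ζ / ν * Real.tanh L := by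
    rw [Real.tanh_eq_sinh_div_cosh, sub_zero]
    field_simp
  refine ⟨hnη, ?_, ?_⟩
  · have hlim : Tendsto (fun n : ℕ => 1 + (2 * ((ξ n : ℝ) - 1) * t n) /
        (Real.sqrt (1 + t n ^ 2) *
          (Real.cosh (((n:ℝ) - (ξ n : ℝ) + 1) * η n) / Real.sinh (((n:ℝ) - (ξ n : ℝ) + 1) * η n))
          + t n)) atTop (𝓝 (1 + (ζ/ν) / (Real.cosh L / Real.sinh L + 0))) :=
      tendsto_const_nhds.add (hnum1.div (hcK.add htend) (by rw [add_zero]; exact hcothpos.ne'))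
    rw [hval1] at hlim
    refine Tendsto.congr' ?_ hlim
    filter_upwards [eventually_ge_atTop 1] with n hn
    have htp := ht n hn
    rw [hs n hn, hc n hn]
    congr 1
    exact (aux_add _ _ _ _ htp.ne').symm
  · have hlim : Tendsto (fun n : ℕ => 1 + (2 * (ξ n : ℝ) * t n) /
        (Real.sqrt (1 + t n ^ 2) *
          (Real.cosh (((n:ℝ) - (ξ n : ℝ) + 1) * η n) / Real.sinh (((n:ℝ) - (ξ n : ℝ) + 1) * η n))
          - t n)) atTop (𝓝 (1 + (ζ/ν) / (Real.cosh L / Real.sinh L - 0))) :=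
      tendsto_const_nhds.add (hnum2.div (hcK.sub htend) (by rw [sub_zero]; exact hcothpos.ne'))
    rw [hval2] at hlim
    refine Tendsto.congr' ?_ hlim
    filter_upwards [eventually_ge_atTop 1] with n hn
    have htp := ht n hn
    rw [hs n hn, hc n hn]
    congr 1
    exact (aux_sub _ _ _ _ htp.ne').symm
end
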